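/- arXiv:1506.01852 — 3 statements merged into one kernel-verified Lean document; each statement's English description precedes it below -/
import Mathlib

section
/- The map T ↦ (F(T),R(T)) is a bijection from the set 𝒯 of spanning trees of the augmented graph Γ_ρ onto the set of rooted spanning forests of Γ, i.e. onto pairs (F,R) where F⊆E is an acyclic edge set (spanning forest of Γ) and R⊆V contains exactly one vertex from each connected component of the forest F on V. -/
open MeasureTheory Real Filter
open scoped BigOperators

attribute [local instance] Classical.propDecidable

namespace H22

variable {V : Type*} [Fintype V] [DecidableEq V]

/-- The augmented graph `Γ_ρ`: add an extra vertex `ρ` (encoded by `none`)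
joined to every vertex of the original graph. -/
def aug (G : SimpleGraph V) : SimpleGraph (Option V) :=
  SimpleGraph.fromRel (fun a b =>
    match a, b with
    | some i, some j => G.Adj i j
    | _, _ => True)

/-- `T` is (the edge set of) a spanning tree of `G`. -/
def IsSpanningTree {α : Type*} (G : SimpleGraph α) (T : Finset (Sym2 α)) : Prop :=
  ↑T ⊆ G.edgeSet ∧ (SimpleGraph.fromEdgeSet (↑T : Set (Sym2 α))).IsTree

/-- The finset of all spanning trees of `G`. -/
noncomputable def STrees {α : Type*} [Fintype α] [DecidableEq α] (G : SimpleGraph α) :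
    Finset (Finset (Sym2 α)) :=
  Finset.univ.filter (fun T => IsSpanningTree G T)

/-- Extension of a vector `t : V → ℝ` to `Option V` by `t_ρ := 0`. -/
def extV (t : V → ℝ) : Option V → ℝ := fun a => Option.elim a 0 t

/-- Lift of a (symmetrized) function of two vertices to unordered pairs. -/
noncomputable def esym {α : Type*} (f : α → α → ℝ) : Sym2 α → ℝ :=
  Sym2.lift ⟨fun a b => (f a b + f b a) / 2, fun a b => by ring⟩

/-- Combined edge weights on the augmented graph: `β` on edges of `Γ`,
`ε_i` on the edge `i ∼ ρ`. -/
def bres (β : V → V → ℝ) (ε : V → ℝ) : Option V → Option V → ℝ := fun a b =>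
  match a, b with
  | some i, some j => β i j
  | some i, none => ε i
  | none, some j => ε j
  | none, none => 0

/-- `B_{ij}(t,s) = cosh(t_i - t_j) + ½ (s_i - s_j)² e^{t_i+t_j}` on the augmented graph. -/
noncomputable def Bfun (t s : V → ℝ) (a b : Option V) : ℝ :=
  Real.cosh (extV t a - extV t b) +
    (1 / 2) * (extV s a - extV s b) ^ 2 * Real.exp (extV t a + extV t b)

/-- Weight `β_{ij} e^{t_i+t_j}` of an edge of the augmented graph. -/
noncomputable def treeW (β : V → V → ℝ) (ε : V → ℝ) (t : V → ℝ) : Sym2 (Option V) → ℝ :=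
  esym (fun a b => bres β ε a b * Real.exp (extV t a + extV t b))

/-- Gibbs factor `e^{-β_{ij}(B_{ij}(t,s)-1)}` of an edge of the augmented graph. -/
noncomputable def gibbs (β : V → V → ℝ) (ε : V → ℝ) (t s : V → ℝ) : Sym2 (Option V) → ℝ :=
  esym (fun a b => Real.exp (-(bres β ε a b * (Bfun t s a b - 1))))

/-- The density of the measure `μ^ε` with respect to
(Lebesgue on `ℝ^V × ℝ^V`) × (counting measure on spanning trees). -/
noncomputable def dens (G : SimpleGraph V) (β : V → V → ℝ) (ε : V → ℝ)
    (t s : V → ℝ) (T : Finset (Sym2 (Option V))) : ℝ :=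
  (∏ j, Real.exp (-t j) / (2 * Real.pi)) *
  (∏ e ∈ Finset.univ.filter (fun e : Sym2 (Option V) => e ∈ (aug G).edgeSet),
      gibbs β ε t s e) *
  (∏ e ∈ T, treeW β ε t e)

/-- Expectation of an observable `f(t,s,T)` under the measure `μ^ε`. -/
noncomputable def expect (G : SimpleGraph V) (β : V → V → ℝ) (ε : V → ℝ)
    (f : (V → ℝ) → (V → ℝ) → Finset (Sym2 (Option V)) → ℝ) : ℝ :=
  ∑ T ∈ STrees (aug G), ∫ p : (V → ℝ) × (V → ℝ), dens G β ε p.1 p.2 T * f p.1 p.2 T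

/-- The weighted graph Laplacian `A(t)` of `Γ`. -/
noncomputable def Amat (G : SimpleGraph V) (β : V → V → ℝ) (t : V → ℝ) : Matrix V V ℝ :=
  Matrix.of fun i j =>
    if i = j then ∑ k ∈ Finset.univ.filter (fun k => G.Adj k j), β k j * Real.exp (t k + t j)
    else if G.Adj i j then -(β i j * Real.exp (t i + t j)) else 0

/-- The pinning diagonal matrix `ε̂(t) = diag(ε_i e^{t_i})`. -/
noncomputable def epsHat (ε : V → ℝ) (t : V → ℝ) : Matrix V V ℝ :=
  Matrix.diagonal fun i => ε i * Real.exp (t i)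

/-- The Green's function `G^ε_{xy} = e^{t_x+t_y} (A(t)+ε̂(t))⁻¹_{xy}`. -/
noncomputable def Gfun (G : SimpleGraph V) (β : V → V → ℝ) (ε : V → ℝ)
    (t : V → ℝ) (x y : V) : ℝ :=
  Real.exp (t x + t y) * (Amat G β t + epsHat ε t)⁻¹ x y

/-- The edge `i ∼ ρ` of the augmented graph. -/
def rootEdge (i : V) : Sym2 (Option V) := s(some i, none)

/-- The set of roots `R(T) = {i ∈ V : (i ∼ ρ) ∈ T}`. -/
noncomputable def roots (T : Finset (Sym2 (Option V))) : Finset V :=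
  Finset.univ.filter fun i => rootEdge i ∈ T

/-- The forest `F(T) = T ∩ E`: edges of `T` not incident to `ρ`. -/
noncomputable def forestOf (T : Finset (Sym2 (Option V))) : Finset (Sym2 (Option V)) :=
  T.filter fun e => ¬ ((none : Option V) ∈ e)

/-- `x ↔_T y`: `x` and `y` are connected in `T` through a path not using `ρ`. -/
def connIn (T : Finset (Sym2 (Option V))) (x y : V) : Prop :=
  (SimpleGraph.fromEdgeSet (↑(forestOf T) : Set (Sym2 (Option V)))).Reachable (some x) (some y)

/-- The observable `O^π_{xy}`. -/
noncomputable def obs (pv : V → ℝ) (x y : V) (t : V → ℝ)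
    (T : Finset (Sym2 (Option V))) : ℝ :=
  Real.exp (t x + t y) / (pv x * Real.exp (t x) + pv y * Real.exp (t y)) *
    (if rootEdge x ∈ T ∧ connIn T x y then 1 else 0)

/-- The pinning `ε = (π_i ε)_{i ∈ V}`. -/
def pinOf (pv : V → ℝ) (ε : ℝ) : V → ℝ := fun i => pv i * ε

/-- The pinning `c δ_x` concentrated at the single vertex `x`. -/
def singlePin (x : V) (c : ℝ) : V → ℝ := fun i => if i = x then c else 0

end H22

namespace H22

/-- The spanning forest `F(T) = T ∩ E` of `Γ`, viewed as a finset of edges of `Γ`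
(i.e. unordered pairs of vertices of `V`). -/
noncomputable def FofV {V : Type*} [Fintype V] [DecidableEq V]
    (T : Finset (Sym2 (Option V))) : Finset (Sym2 V) :=
  Finset.univ.filter fun e => Sym2.map some e ∈ T

section Aux

variable {V : Type*} [Fintype V] [DecidableEq V]

lemma aug_adj_some_some {G : SimpleGraph V} {i j : V} :
    (aug G).Adj (some i) (some j) ↔ G.Adj i j := by
  rw [aug, SimpleGraph.fromRel_adj]
  constructor
  · rintro ⟨-, h | h⟩
    · exact h
    · exact h.symm
  · intro h
    exact ⟨by simpa using h.ne, Or.inl h⟩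

lemma aug_adj_some_none {G : SimpleGraph V} {i : V} :
    (aug G).Adj (some i) none := by
  rw [aug, SimpleGraph.fromRel_adj]
  exact ⟨by simp, Or.inl trivial⟩

lemma mem_FofV {T : Finset (Sym2 (Option V))} {e : Sym2 V} :
    e ∈ FofV T ↔ Sym2.map some e ∈ T := by simp [FofV]

lemma mem_roots {T : Finset (Sym2 (Option V))} {i : V} :
    i ∈ roots T ↔ rootEdge i ∈ T := by simp [roots]

lemma adj_iff {T : Finset (Sym2 (Option V))} {i j : V} :
    (SimpleGraph.fromEdgeSet (↑T : Set (Sym2 (Option V)))).Adj (some i) (some j) ↔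
    (SimpleGraph.fromEdgeSet (↑(FofV T) : Set (Sym2 V))).Adj i j := by
  simp [SimpleGraph.fromEdgeSet_adj, mem_FofV, Sym2.map_pair_eq]

/-- Homomorphism from the forest graph on `V` up to the graph on `Option V`. -/
def homUp (T : Finset (Sym2 (Option V))) :
    (SimpleGraph.fromEdgeSet (↑(FofV T) : Set (Sym2 V))) →g
    (SimpleGraph.fromEdgeSet (↑T : Set (Sym2 (Option V)))) :=
  ⟨some, fun h => adj_iff.mpr h⟩

lemma walkDown {T : Finset (Sym2 (Option V))} :
    ∀ {a b : Option V}
      (p : (SimpleGraph.fromEdgeSet (↑T : Set (Sym2 (Option V)))).Walk a b),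
      none ∉ p.support → ∀ {x y : V}, a = some x → b = some y →
      ∃ q : (SimpleGraph.fromEdgeSet (↑(FofV T) : Set (Sym2 V))).Walk x y,
        q.support.map some = p.support ∧ q.edges.map (Sym2.map some) = p.edges := by
  intro a b p
  induction p with
  | nil =>
    rintro h x y rfl hy
    obtain rfl := Option.some_injective _ hy
    exact ⟨.nil, rfl, rfl⟩
  | @cons u v w hadj p ih =>
    rintro h x y rfl rfl
    have hv : v ≠ none := by
      rintro rfl
      exact h (List.mem_cons_of_mem _ p.start_mem_support)
    obtain ⟨z, rfl⟩ := Option.ne_none_iff_exists'.mp hv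
    have hnp : none ∉ p.support := fun hn => h (List.mem_cons_of_mem _ hn)
    obtain ⟨q, hqs, hqe⟩ := ih hnp rfl rfl
    refine ⟨.cons (adj_iff.mp hadj) q, ?_, ?_⟩
    · simp [SimpleGraph.Walk.support_cons, hqs]
    · simp [SimpleGraph.Walk.edges_cons, hqe, Sym2.map_pair_eq]

lemma none_not_mem_map (e : Sym2 V) : (none : Option V) ∉ Sym2.map some e := by
  induction e using Sym2.ind with
  | _ a b => simp [Sym2.map_pair_eq]

lemma rootEdge_injective : Function.Injective (rootEdge (V := V)) := by
  intro i j h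
  rw [rootEdge, rootEdge, Sym2.eq_iff] at h
  rcases h with ⟨h1, -⟩ | ⟨h1, -⟩
  · exact Option.some_injective _ h1
  · exact absurd h1 (by simp)

lemma decompT {G : SimpleGraph V} {T : Finset (Sym2 (Option V))}
    (hsub : ↑T ⊆ (aug G).edgeSet) :
    T = (FofV T).image (Sym2.map some) ∪ (roots T).image rootEdge := by
  ext e
  constructor
  · intro he
    induction e using Sym2.ind with
    | _ a b =>
      match a, b with
      | some i, some j =>
        refine Finset.mem_union_left _ (Finset.mem_image.mpr ⟨s(i, j), ?_, ?_⟩)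
        · exact mem_FofV.mpr (by rwa [Sym2.map_pair_eq])
        · exact Sym2.map_pair_eq ..
      | some i, none =>
        exact Finset.mem_union_right _
          (Finset.mem_image.mpr ⟨i, mem_roots.mpr he, rfl⟩)
      | none, some j =>
        refine Finset.mem_union_right _
          (Finset.mem_image.mpr ⟨j, mem_roots.mpr ?_, ?_⟩)
        · rwa [rootEdge, Sym2.eq_swap]
        · rw [rootEdge, Sym2.eq_swap]
      | none, none =>
        exact absurd (SimpleGraph.not_isDiag_of_mem_edgeSet _ (hsub he)) (by simp)
  · intro he
    rcases Finset.mem_union.mp he with h | h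
    · obtain ⟨f, hf, rfl⟩ := Finset.mem_image.mp h
      exact mem_FofV.mp hf
    · obtain ⟨i, hi, rfl⟩ := Finset.mem_image.mp h
      exact mem_roots.mp hi

/-- The lift of a rooted spanning forest to an edge set on `Option V`. -/
noncomputable def liftT (F : Finset (Sym2 V)) (R : Finset V) :
    Finset (Sym2 (Option V)) :=
  F.image (Sym2.map some) ∪ R.image rootEdge

lemma FofV_liftT (F : Finset (Sym2 V)) (R : Finset V) : FofV (liftT F R) = F := by
  ext e
  rw [mem_FofV, liftT, Finset.mem_union]
  constructor
  · rintro (h | h)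
    · obtain ⟨f, hf, hfe⟩ := Finset.mem_image.mp h
      rwa [← Sym2.map.injective (Option.some_injective V) hfe]
    · obtain ⟨i, -, hi⟩ := Finset.mem_image.mp h
      exact absurd (hi ▸ (by simp [rootEdge] : (none : Option V) ∈ rootEdge i))
        (none_not_mem_map e)
  · intro h
    exact Or.inl (Finset.mem_image.mpr ⟨e, h, rfl⟩)

lemma roots_liftT (F : Finset (Sym2 V)) (R : Finset V) : roots (liftT F R) = R := by
  ext i
  rw [mem_roots, liftT, Finset.mem_union]
  constructor
  · rintro (h | h)
    · obtain ⟨f, -, hf⟩ := Finset.mem_image.mp h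
      exact absurd (hf ▸ none_not_mem_map f) (by simp [rootEdge])
    · obtain ⟨j, hj, hji⟩ := Finset.mem_image.mp h
      rwa [← rootEdge_injective hji]
  · intro h
    exact Or.inr (Finset.mem_image.mpr ⟨i, h, rfl⟩)

end Aux

section Main

variable {V : Type*} [Fintype V] [DecidableEq V]

lemma no_cycle_at_none {F : Finset (Sym2 V)} {R : Finset V}
    (huniq : ∀ v : V, ∃! r : V, r ∈ R ∧
      (SimpleGraph.fromEdgeSet (↑F : Set (Sym2 V))).Reachable v r)
    (c : (SimpleGraph.fromEdgeSet
        (↑(liftT F R) : Set (Sym2 (Option V)))).Walk none none) :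
    ¬ c.IsCycle := by
  intro hc
  cases c with
  | nil => exact hc.ne_nil rfl
  | cons hadj q =>
    obtain ⟨r1, rfl⟩ := Option.ne_none_iff_exists'.mp hadj.ne'
    generalize hrev : q.reverse = qr
    cases qr with
    | cons hadj2 q2 =>
      obtain ⟨r2, rfl⟩ := Option.ne_none_iff_exists'.mp hadj2.ne'
      have hqsupp : q.support.Nodup := by
        simpa using hc.support_nodup
      have hq2 : (none : Option V) ∉ q2.support := by
        have h1 : q.reverse.support.Nodup := by
          rw [SimpleGraph.Walk.support_reverse]
          exact List.nodup_reverse.mpr hqsupp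
        rw [hrev] at h1
        simp only [SimpleGraph.Walk.support_cons, List.nodup_cons] at h1
        exact h1.1
      obtain ⟨q3, -, -⟩ := walkDown q2 hq2 rfl rfl
      have hreach : (SimpleGraph.fromEdgeSet (↑F : Set (Sym2 V))).Reachable r2 r1 := by
        rw [← FofV_liftT F R]; exact ⟨q3⟩
      have hr1 : r1 ∈ R := by
        rw [← roots_liftT F R]
        refine mem_roots.mpr (Finset.mem_coe.mp ?_)
        have := ((SimpleGraph.fromEdgeSet_adj _).mp hadj).1
        rwa [rootEdge, Sym2.eq_swap]
      have hr2 : r2 ∈ R := by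
        rw [← roots_liftT F R]
        refine mem_roots.mpr (Finset.mem_coe.mp ?_)
        have := ((SimpleGraph.fromEdgeSet_adj _).mp hadj2).1
        rwa [rootEdge, Sym2.eq_swap]
      have heqr : r2 = r1 := by
        obtain ⟨r0, -, hun⟩ := huniq r2
        exact (hun r2 ⟨hr2, SimpleGraph.Reachable.refl _⟩).trans
          (hun r1 ⟨hr1, hreach⟩).symm
      subst heqr
      have hnodup := hc.isCircuit.isTrail.edges_nodup
      rw [SimpleGraph.Walk.edges_cons, List.nodup_cons] at hnodup
      apply hnodup.1
      have hmem : s(none, some r2) ∈ q.reverse.edges := by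
        rw [hrev, SimpleGraph.Walk.edges_cons]
        exact List.mem_cons_self
      rw [SimpleGraph.Walk.edges_reverse, List.mem_reverse] at hmem
      exact hmem

end Main

/-- the map `T ↦ (F(T), R(T))` is a bijection from the set of spanning
trees of the augmented graph `Γ_ρ` onto the set of rooted spanning forests of `Γ`, i.e.
pairs `(F, R)` where `F ⊆ E` is acyclic and `R` contains exactly one vertex from each
connected component of the forest `F` on `V`. -/
theorem stmt_2 {V : Type*} [Fintype V] [DecidableEq V]
    (G : SimpleGraph V) (hG : G.Connected) :
    Set.BijOn (fun T => (FofV T, roots T))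
      {T : Finset (Sym2 (Option V)) | IsSpanningTree (aug G) T}
      {p : Finset (Sym2 V) × Finset V |
        ↑p.1 ⊆ G.edgeSet ∧
        (SimpleGraph.fromEdgeSet (↑p.1 : Set (Sym2 V))).IsAcyclic ∧
        ∀ v : V, ∃! r : V, r ∈ p.2 ∧
          (SimpleGraph.fromEdgeSet (↑p.1 : Set (Sym2 V))).Reachable v r} := by
  refine ⟨?_, ?_, ?_⟩
  · -- MapsTo
    rintro T ⟨hsub, htree⟩
    refine ⟨?_, ?_, ?_⟩
    · intro e he
      induction e using Sym2.ind with
      | _ i j =>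
        rw [SimpleGraph.mem_edgeSet]
        have h1 : Sym2.map some s(i, j) ∈ T := mem_FofV.mp (Finset.mem_coe.mp he)
        have h2 := hsub h1
        rw [Sym2.map_pair_eq, SimpleGraph.mem_edgeSet] at h2
        exact aug_adj_some_some.mp h2
    · intro v c hc
      exact htree.IsAcyclic _ (hc.map (f := homUp T) (Option.some_injective V))
    · intro v
      obtain ⟨w⟩ := htree.isConnected.preconnected (some v) none
      obtain ⟨p, hp⟩ := w.reverse.toPath
      cases p with
      | cons hadj q =>
        obtain ⟨r, rfl⟩ := Option.ne_none_iff_exists'.mp hadj.ne'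
        rw [SimpleGraph.Walk.cons_isPath_iff] at hp
        obtain ⟨q', -, -⟩ := walkDown q hp.2 rfl rfl
        have hrT : r ∈ roots T := by
          refine mem_roots.mpr (Finset.mem_coe.mp ?_)
          have := ((SimpleGraph.fromEdgeSet_adj _).mp hadj).1
          rwa [rootEdge, Sym2.eq_swap]
        refine ⟨r, ⟨hrT, SimpleGraph.Reachable.symm ⟨q'⟩⟩, ?_⟩
        rintro r' ⟨hr', hvr'⟩
        by_contra hne
        have hrr' : (SimpleGraph.fromEdgeSet
            (↑(FofV T) : Set (Sym2 V))).Reachable r' r :=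
          hvr'.symm.trans (SimpleGraph.Reachable.symm ⟨q'⟩)
        obtain ⟨wq⟩ := hrr'
        have h1 : (SimpleGraph.fromEdgeSet
            (↑T : Set (Sym2 (Option V)))).Adj (some r') none := by
          rw [SimpleGraph.fromEdgeSet_adj]
          exact ⟨Finset.mem_coe.mpr (mem_roots.mp hr'), by simp⟩
        have hP2 : (SimpleGraph.Walk.cons h1
            (SimpleGraph.Walk.cons hadj SimpleGraph.Walk.nil)).IsPath := by
          rw [SimpleGraph.Walk.isPath_def]
          simp [hne]
        have heqp := htree.IsAcyclic.path_unique
          ((wq.map (homUp T)).toPath)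
          ⟨SimpleGraph.Walk.cons h1 (SimpleGraph.Walk.cons hadj SimpleGraph.Walk.nil), hP2⟩
        have hval := congrArg Subtype.val heqp
        have hmem : (none : Option V) ∈ ((wq.map (homUp T)).toPath).1.support := by
          rw [hval]
          exact List.mem_cons_of_mem _ List.mem_cons_self
        have h3 := SimpleGraph.Walk.support_toPath_subset _ hmem
        rw [SimpleGraph.Walk.support_map] at h3
        obtain ⟨u0, -, hu0⟩ := List.mem_map.mp h3
        exact Option.some_ne_none u0 hu0
  · -- InjOn
    rintro T1 ⟨hsub1, -⟩ T2 ⟨hsub2, -⟩ heq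
    simp only [Prod.mk.injEq] at heq
    rw [decompT hsub1, decompT hsub2, heq.1, heq.2]
  · -- SurjOn
    rintro ⟨F, R⟩ ⟨hFE, hacyc, huniq⟩
    have hacyc' : (SimpleGraph.fromEdgeSet
        (↑(FofV (liftT F R)) : Set (Sym2 V))).IsAcyclic := by
      rw [FofV_liftT]; exact hacyc
    refine ⟨liftT F R, ⟨?_, ?_, ?_⟩, ?_⟩
    · -- edges of liftT are edges of aug G
      intro e he
      rcases Finset.mem_union.mp (Finset.mem_coe.mp he) with h | h
      · obtain ⟨f, hf, rfl⟩ := Finset.mem_image.mp h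
        induction f using Sym2.ind with
        | _ i j =>
          have := hFE (Finset.mem_coe.mpr hf)
          rw [SimpleGraph.mem_edgeSet] at this
          rw [Sym2.map_pair_eq, SimpleGraph.mem_edgeSet]
          exact aug_adj_some_some.mpr this
      · obtain ⟨i, -, rfl⟩ := Finset.mem_image.mp h
        rw [rootEdge, SimpleGraph.mem_edgeSet]
        exact aug_adj_some_none
    · -- connected
      have key : ∀ o : Option V, (SimpleGraph.fromEdgeSet
          (↑(liftT F R) : Set (Sym2 (Option V)))).Reachable o none := by
        intro o
        match o with
        | none => exact SimpleGraph.Reachable.refl _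
        | some v =>
          obtain ⟨r, ⟨hrR, hreach⟩, -⟩ := huniq v
          have hreach' : (SimpleGraph.fromEdgeSet
              (↑(FofV (liftT F R)) : Set (Sym2 V))).Reachable v r := by
            rw [FofV_liftT]; exact hreach
          have h1 := hreach'.map (homUp (liftT F R))
          have h2 : (SimpleGraph.fromEdgeSet
              (↑(liftT F R) : Set (Sym2 (Option V)))).Adj (some r) none := by
            rw [SimpleGraph.fromEdgeSet_adj]
            refine ⟨Finset.mem_coe.mpr ?_, by simp⟩
            exact Finset.mem_union_right _ (Finset.mem_image.mpr ⟨r, hrR, rfl⟩)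
          exact h1.trans h2.reachable
      exact ⟨fun a b => (key a).trans (key b).symm⟩
    · -- acyclic
      intro a c hc
      by_cases hn : (none : Option V) ∈ c.support
      · exact no_cycle_at_none huniq (c.rotate none hn) (hc.rotate hn)
      · have ha : a ≠ none := fun h => hn (h ▸ c.start_mem_support)
        obtain ⟨x, rfl⟩ := Option.ne_none_iff_exists'.mp ha
        obtain ⟨q, hqs, hqe⟩ := walkDown c hn rfl rfl
        have hce : c.edges ≠ [] := by
          cases c with
          | nil => exact absurd rfl hc.ne_nil
          | cons h p => simp
        have hq : q.IsCycle := by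
          rw [SimpleGraph.Walk.isCycle_def]
          refine ⟨⟨?_⟩, ?_, ?_⟩
          · have := hc.isCircuit.isTrail.edges_nodup
            rw [← hqe] at this
            exact this.of_map _
          · rintro rfl
            exact hce hqe.symm
          · have := hc.support_nodup
            rw [← hqs, ← List.map_tail] at this
            exact this.of_map _
        exact hacyc' q hq
    · show (FofV (liftT F R), roots (liftT F R)) = (F, R)
      rw [FofV_liftT, roots_liftT]


end H22
end

section
/- For all ε>0, with pinning ε=(π_i ε)_{i∈V}, E_{μ^ε}[O^π_xy · 1{R(T)={x}}] ≤ e^{Σ_{i∈V∖{x}} ε_i} · E_{μ^{ε_xδ_x}}[O^π_xy]. -/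
open MeasureTheory Real Filter
open scoped BigOperators

attribute [local instance] Classical.propDecidable

set_option linter.unusedSectionVars false
set_option maxHeartbeats 1000000

namespace H22

section Aux

variable {V : Type*} [Fintype V] [DecidableEq V]

lemma aux_cosh_quad (u : ℝ) : u^2/4 ≤ Real.cosh u - 1 := by
  rw [← Real.cosh_abs, ← sq_abs]
  set v := |u| with hv
  have hv0 : 0 ≤ v := abs_nonneg u
  have h1 : 1 + v + v^2/2 ≤ Real.exp v := by
    have := Real.sum_le_exp_of_nonneg hv0 3
    simp [Finset.sum_range_succ, Nat.factorial] at this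
    nlinarith [this]
  have h2 : 1 - v ≤ Real.exp (-v) := by nlinarith [Real.add_one_le_exp (-v)]
  rw [Real.cosh_eq]
  nlinarith

lemma aux_integrable_exp_abs_cosh (a d : ℝ) (hd : 0 < d) :
    Integrable (fun u : ℝ => Real.exp (a * |u| - d * (Real.cosh u - 1))) := by
  have hg : Integrable (fun u : ℝ => Real.exp (2*a^2/d) * Real.exp (-(d/8) * u^2)) :=
    (integrable_exp_neg_mul_sq (by positivity)).const_mul _
  refine hg.mono' ?_ ?_
  · exact (Real.continuous_exp.comp (by continuity)).aestronglyMeasurable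
  · refine Filter.Eventually.of_forall (fun u => ?_)
    rw [Real.norm_eq_abs, abs_of_nonneg (Real.exp_pos _).le, ← Real.exp_add]
    apply Real.exp_le_exp.2
    have h1 := aux_cosh_quad u
    have h2 : d * (u^2/4) ≤ d * (Real.cosh u - 1) := by nlinarith
    have h3 : 0 ≤ (d*|u| - 4*a)^2 := sq_nonneg _
    have h4 : |u|^2 = u^2 := sq_abs u
    have h5 : 2*a^2/d*d = 2*a^2 := by field_simp
    nlinarith [hd, h5, mul_pos hd hd]

/-- The shear matrix of a parent map. -/
def shearMat (x : V) (p : V → V) : Matrix V V ℝ :=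
  Matrix.of fun i j => (if j = i then (1:ℝ) else 0) - (if i ≠ x ∧ j = p i then 1 else 0)

lemma shear_apply (x : V) (p : V → V) (t : V → ℝ) (i : V) :
    Matrix.toLin' (shearMat x p) t i = t i - (if i = x then 0 else t (p i)) := by
  rw [Matrix.toLin'_apply]
  show dotProduct _ t = _
  simp only [dotProduct, shearMat, Matrix.of_apply, sub_mul,
    Finset.sum_sub_distrib, ite_mul, one_mul, zero_mul]
  congr 1
  · simp [Finset.sum_ite_eq' Finset.univ i t]
  · by_cases hix : i = x
    · simp [hix]
    · simp only [hix, ne_eq, not_false_iff, true_and]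
      simp [Finset.sum_ite_eq' Finset.univ (p i) t]

lemma shear_det (x : V) (p : V → V) (φ : V → ℕ) (hinj : Function.Injective φ)
    (hφ : ∀ j, j ≠ x → φ (p j) < φ j) : (shearMat x p).det = 1 := by
  letI : LinearOrder V := LinearOrder.lift' φ hinj
  have hle : ∀ a b : V, a ≤ b ↔ φ a ≤ φ b := fun a b => Iff.rfl
  have hlt : ∀ a b : V, a < b → φ a < φ b := by
    intro a b hab
    rcases lt_iff_le_not_ge.1 hab with ⟨h1, h2⟩
    rw [hle] at h1 h2
    omega
  have htri : (shearMat x p).BlockTriangular OrderDual.toDual := by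
    intro i j hij
    have hij' : i < j := hij
    have h1 : j ≠ i := ne_of_gt hij'
    have h2 : ¬ (i ≠ x ∧ j = p i) := by
      rintro ⟨hix, rfl⟩
      exact absurd (hlt i (p i) hij') (by have := hφ i hix; omega)
    simp [shearMat, h1, h2]
  rw [Matrix.det_of_lowerTriangular _ htri]
  have : ∀ i : V, shearMat x p i i = 1 := by
    intro i
    have h2 : ¬ (i ≠ x ∧ i = p i) := by
      rintro ⟨hix, hpi⟩
      exact absurd (hφ i hix) (by rw [← hpi]; omega)
    simp [shearMat, h2]
  simp [this]

lemma shear_mp (x : V) (p : V → V) (φ : V → ℕ) (hinj : Function.Injective φ)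
    (hφ : ∀ j, j ≠ x → φ (p j) < φ j) :
    MeasurePreserving (fun t : V → ℝ => Matrix.toLin' (shearMat x p) t) volume volume := by
  refine ⟨(LinearMap.continuous_on_pi _).measurable, ?_⟩
  have := Real.map_matrix_volume_pi_eq_smul_volume_pi
    (M := shearMat x p) (by rw [shear_det x p φ hinj hφ]; norm_num)
  show Measure.map (⇑(Matrix.toLin' (shearMat x p))) volume = volume
  simpa [shear_det x p φ hinj hφ] using this

lemma abs_le_shear_sum (x : V) (p : V → V) (r : V → ℕ) (hp : ∀ j, j ≠ x → r (p j) < r j)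
    (t : V → ℝ) (j : V) :
    |t j| ≤ |t x| + ∑ k ∈ Finset.univ.erase x, |t k - t (p k)| := by
  classical
  suffices H : ∀ m : ℕ, ∀ j : V, r j ≤ m →
      |t j| ≤ |t x| + ∑ k ∈ (Finset.univ.erase x).filter (fun k => r k ≤ m), |t k - t (p k)| by
    refine (H (r j) j le_rfl).trans (add_le_add (le_refl _) ?_)
    exact Finset.sum_le_sum_of_subset_of_nonneg (Finset.filter_subset _ _)
      (fun k _ _ => abs_nonneg _)
  intro m
  induction m with
  | zero =>
    intro j hj
    by_cases hjx : j = x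
    · subst hjx
      exact le_add_of_nonneg_right (Finset.sum_nonneg fun k _ => abs_nonneg _)
    · exact absurd (hp j hjx) (by omega)
  | succ m ih =>
    intro j hj
    by_cases hjx : j = x
    · subst hjx
      exact le_add_of_nonneg_right (Finset.sum_nonneg fun k _ => abs_nonneg _)
    by_cases hjm : r j ≤ m
    · refine (ih j hjm).trans (add_le_add (le_refl _) ?_)
      refine Finset.sum_le_sum_of_subset_of_nonneg ?_ (fun k _ _ => abs_nonneg _)
      intro k hk
      simp only [Finset.mem_filter] at hk ⊢
      exact ⟨hk.1, by omega⟩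
    · have hpj : r (p j) ≤ m := by have := hp j hjx; omega
      have h1 : |t j| ≤ |t j - t (p j)| + |t (p j)| := by
        calc |t j| = |(t j - t (p j)) + t (p j)| := by ring_nf
        _ ≤ _ := abs_add_le _ _
      have h2 := ih (p j) hpj
      have h3 : ∑ k ∈ (Finset.univ.erase x).filter (fun k => r k ≤ m), |t k - t (p k)|
            + |t j - t (p j)|
          ≤ ∑ k ∈ (Finset.univ.erase x).filter (fun k => r k ≤ m + 1), |t k - t (p k)| := by
        have hjn : j ∉ (Finset.univ.erase x).filter (fun k => r k ≤ m) := by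
          simp [hjm]
        have hsub : insert j ((Finset.univ.erase x).filter (fun k => r k ≤ m))
            ⊆ (Finset.univ.erase x).filter (fun k => r k ≤ m + 1) := by
          intro k hk
          rcases Finset.mem_insert.1 hk with rfl | hk
          · simp only [Finset.mem_filter, Finset.mem_erase]
            exact ⟨⟨hjx, Finset.mem_univ _⟩, by omega⟩
          · simp only [Finset.mem_filter, Finset.mem_erase] at hk ⊢
            exact ⟨hk.1, by omega⟩
        calc _ = ∑ k ∈ insert j ((Finset.univ.erase x).filter (fun k => r k ≤ m)),
              |t k - t (p k)| := by rw [Finset.sum_insert hjn]; ring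
        _ ≤ _ := Finset.sum_le_sum_of_subset_of_nonneg hsub (fun k _ _ => abs_nonneg _)
      linarith

noncomputable def Dv (x : V) (p : V → V) (t : V → ℝ) (j : V) : ℝ :=
  t j - (if j = x then 0 else t (p j))

lemma Dv_continuous (x : V) (p : V → V) (j : V) :
    Continuous (fun t : V → ℝ => Dv x p t j) := by
  unfold Dv
  by_cases hj : j = x <;> simp [hj] <;> fun_prop

lemma exists_phi (x : V) (p : V → V) (r : V → ℕ) (hp : ∀ j, j ≠ x → r (p j) < r j) :
    ∃ φ : V → ℕ, Function.Injective φ ∧ ∀ j, j ≠ x → φ (p j) < φ j := by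
  classical
  set e := Fintype.equivFin V
  set n := Fintype.card V with hn
  have hkey : ∀ u v eu ev : ℕ, eu < n → ev < n → u * n + eu = v * n + ev → u = v := by
    intro u v eu ev hu hv h
    rcases Nat.lt_trichotomy u v with h1 | h1 | h1
    · exfalso
      have : (u + 1) * n ≤ v * n := Nat.mul_le_mul_right n h1
      have : u * n + eu < v * n + ev := by
        calc u * n + eu < (u + 1) * n := by ring_nf; omega
        _ ≤ v * n := this
        _ ≤ v * n + ev := Nat.le_add_right _ _
      omega
    · exact h1
    · exfalso
      have : (v + 1) * n ≤ u * n := Nat.mul_le_mul_right n h1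
      have : v * n + ev < u * n + eu := by
        calc v * n + ev < (v + 1) * n := by ring_nf; omega
        _ ≤ u * n := this
        _ ≤ u * n + eu := Nat.le_add_right _ _
      omega
  refine ⟨fun j => r j * n + e j, ?_, ?_⟩
  · intro a b h
    have ha : (e a : ℕ) < n := (e a).isLt
    have hb : (e b : ℕ) < n := (e b).isLt
    have hr : r a = r b := hkey _ _ _ _ ha hb h
    have : (e a : ℕ) = e b := by simp only [hr] at h; omega
    exact e.injective (Fin.ext this)
  · intro j hj
    have h1 : (e (p j) : ℕ) < n := (e (p j)).isLt
    have h2 : r (p j) + 1 ≤ r j := hp j hj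
    calc r (p j) * n + e (p j) < (r (p j) + 1) * n := by ring_nf; omega
    _ ≤ r j * n := Nat.mul_le_mul_right n h2
    _ ≤ r j * n + e j := Nat.le_add_right _ _

lemma sum_abs_Dv (x : V) (p : V → V) (r : V → ℕ) (hp : ∀ j, j ≠ x → r (p j) < r j)
    (t : V → ℝ) : ∑ k, |t k| ≤ (Fintype.card V) * ∑ j, |Dv x p t j| := by
  have h2 : |t x| + ∑ j ∈ Finset.univ.erase x, |t j - t (p j)| = ∑ j, |Dv x p t j| := by
    rw [← Finset.add_sum_erase _ _ (Finset.mem_univ x)]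
    congr 1
    · simp [Dv]
    · refine Finset.sum_congr rfl (fun j hj => ?_)
      have : j ≠ x := (Finset.mem_erase.1 hj).1
      simp [Dv, this]
  calc ∑ k, |t k| ≤ ∑ _k : V, (|t x| + ∑ j ∈ Finset.univ.erase x, |t j - t (p j)|) :=
        Finset.sum_le_sum (fun k _ => abs_le_shear_sum x p r hp t k)
  _ = (Fintype.card V) * (|t x| + ∑ j ∈ Finset.univ.erase x, |t j - t (p j)|) := by
        rw [Finset.sum_const, nsmul_eq_mul]; rfl
  _ = _ := by rw [h2]

lemma integrable_master (x : V) (p : V → V) (r : V → ℕ) (hp : ∀ j, j ≠ x → r (p j) < r j)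
    (b : V → ℝ) (hb : ∀ j, 0 < b j) (A : ℝ) (hA : 0 ≤ A) :
    Integrable (fun t : V → ℝ =>
      Real.exp (A * ∑ k, |t k|) * ∏ j, Real.exp (-(b j * (Real.cosh (Dv x p t j) - 1)))) := by
  classical
  obtain ⟨φ, hinj, hφ⟩ := exists_phi x p r hp
  set n : ℝ := (Fintype.card V : ℝ) with hn
  have hχcont : Continuous (fun u : V → ℝ =>
      ∏ j, Real.exp (A * n * |u j| - b j * (Real.cosh (u j) - 1))) := by
    refine continuous_finset_prod _ (fun j _ => Real.continuous_exp.comp ?_)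
    exact ((continuous_const.mul (continuous_apply j).abs).sub
      (continuous_const.mul ((Real.continuous_cosh.comp (continuous_apply j)).sub
        continuous_const)))
  have hχint : Integrable (fun u : V → ℝ =>
      ∏ j, Real.exp (A * n * |u j| - b j * (Real.cosh (u j) - 1))) :=
    Integrable.fintype_prod (fun j => aux_integrable_exp_abs_cosh _ _ (hb j))
  have hcomp : Integrable (fun t : V → ℝ =>
      ∏ j, Real.exp (A * n * |Matrix.toLin' (shearMat x p) t j|
        - b j * (Real.cosh (Matrix.toLin' (shearMat x p) t j) - 1))) :=
    ((shear_mp x p φ hinj hφ).integrable_comp hχcont.aestronglyMeasurable).2 hχint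
  refine hcomp.mono' ?_ (Filter.Eventually.of_forall fun t => ?_)
  · refine Continuous.aestronglyMeasurable ?_
    refine Continuous.mul (Real.continuous_exp.comp ?_) ?_
    · exact continuous_const.mul (continuous_finset_sum _ (fun k _ => (continuous_apply k).abs))
    · refine continuous_finset_prod _ (fun j _ => Real.continuous_exp.comp ?_)
      exact (continuous_const.mul (((Real.continuous_cosh.comp (Dv_continuous x p j)).sub
        continuous_const))).neg
  · have hDv : ∀ j, Matrix.toLin' (shearMat x p) t j = Dv x p t j := fun j =>
      shear_apply x p t j
    simp only [hDv]
    rw [Real.norm_eq_abs, ← Real.exp_sum, ← Real.exp_sum, ← Real.exp_add,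
      abs_of_nonneg (Real.exp_pos _).le]
    apply Real.exp_le_exp.2
    have h1 : A * ∑ k, |t k| ≤ ∑ j, A * n * |Dv x p t j| := by
      have := sum_abs_Dv x p r hp t
      calc A * ∑ k, |t k| ≤ A * (n * ∑ j, |Dv x p t j|) := by
            apply mul_le_mul_of_nonneg_left _ hA
            exact_mod_cast this
      _ = ∑ j, A * n * |Dv x p t j| := by
            rw [Finset.mul_sum, Finset.mul_sum]
            exact Finset.sum_congr rfl (fun j _ => by ring)
    have h2 : ∑ j, (A * n * |Dv x p t j| - b j * (Real.cosh (Dv x p t j) - 1))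
        = ∑ j, A * n * |Dv x p t j| + ∑ j, -(b j * (Real.cosh (Dv x p t j) - 1)) := by
      rw [← Finset.sum_add_distrib]
      exact Finset.sum_congr rfl (fun j _ => by ring)
    rw [h2]
    linarith

variable {V : Type*} [Fintype V] [DecidableEq V]

lemma esym_mk (f : Option V → Option V → ℝ) (a b : Option V) :
    esym f s(a, b) = (f a b + f b a) / 2 := rfl

lemma Bfun_symm (t s : V → ℝ) (a b : Option V) : Bfun t s a b = Bfun t s b a := by
  unfold Bfun
  rw [← Real.cosh_abs, abs_sub_comm, Real.cosh_abs, add_comm (extV t a), ← neg_sub (extV s b)]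
  ring

lemma bres_symm (β : V → V → ℝ) (hβ : ∀ i j, β i j = β j i) (ε : V → ℝ) (a b : Option V) :
    bres β ε a b = bres β ε b a := by
  cases a <;> cases b <;> simp [bres, hβ]

lemma gibbs_mk (β : V → V → ℝ) (hβ : ∀ i j, β i j = β j i) (ε : V → ℝ) (t s : V → ℝ)
    (a b : Option V) :
    gibbs β ε t s s(a, b) = Real.exp (-(bres β ε a b * (Bfun t s a b - 1))) := by
  unfold gibbs
  rw [esym_mk, bres_symm β hβ ε b a, Bfun_symm t s b a]
  ring

lemma treeW_mk (β : V → V → ℝ) (hβ : ∀ i j, β i j = β j i) (ε : V → ℝ) (t : V → ℝ)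
    (a b : Option V) :
    treeW β ε t s(a, b) = bres β ε a b * Real.exp (extV t a + extV t b) := by
  unfold treeW
  rw [esym_mk, bres_symm β hβ ε b a, add_comm (extV t b)]
  ring

lemma mem_aug_edge (G : SimpleGraph V) {i j : V} (h : G.Adj i j) :
    s(some i, some j) ∈ (aug G).edgeSet := by
  rw [SimpleGraph.mem_edgeSet]
  exact ⟨by simpa using h.ne, Or.inl h⟩

lemma mem_aug_root (G : SimpleGraph V) (i : V) : rootEdge i ∈ (aug G).edgeSet := by
  rw [rootEdge, SimpleGraph.mem_edgeSet]
  exact ⟨by simp, Or.inl trivial⟩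

lemma aug_edge_cases (G : SimpleGraph V) {e : Sym2 (Option V)} (h : e ∈ (aug G).edgeSet) :
    (∃ i j, G.Adj i j ∧ e = s(some i, some j)) ∨ (∃ i, e = rootEdge i) := by
  induction e using Sym2.ind with
  | _ a b =>
    rw [SimpleGraph.mem_edgeSet] at h
    obtain ⟨hne, hr⟩ := h
    cases a with
    | none => cases b with
      | none => simp at hne
      | some j =>
        right; exact ⟨j, Sym2.eq_swap⟩
    | some i => cases b with
      | none => right; exact ⟨i, rfl⟩
      | some j =>
        left
        rcases hr with h | h
        · exact ⟨i, j, h, rfl⟩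
        · exact ⟨j, i, h, Sym2.eq_swap⟩

lemma one_le_Bfun (t s : V → ℝ) (a b : Option V) : 1 ≤ Bfun t s a b := by
  unfold Bfun
  nlinarith [Real.one_le_cosh (extV t a - extV t b), sq_nonneg (extV s a - extV s b),
    Real.exp_pos (extV t a + extV t b), mul_nonneg (sq_nonneg (extV s a - extV s b))
      (Real.exp_pos (extV t a + extV t b)).le]

lemma obs_nonneg (pv : V → ℝ) (hpv : ∀ i, 0 ≤ pv i) {x : V} (hx : 0 < pv x) (y : V)
    (t : V → ℝ) (T : Finset (Sym2 (Option V))) : 0 ≤ obs pv x y t T := by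
  unfold obs
  have hden : 0 < pv x * Real.exp (t x) + pv y * Real.exp (t y) := by
    have := mul_nonneg (hpv y) (Real.exp_pos (t y)).le
    nlinarith [mul_pos hx (Real.exp_pos (t x))]
  positivity

lemma obs_le (pv : V → ℝ) (hpv : ∀ i, 0 ≤ pv i) {x y : V} (hx : 0 < pv x) (hy : 0 < pv y)
    (t : V → ℝ) (T : Finset (Sym2 (Option V))) :
    obs pv x y t T ≤ (pv y)⁻¹ * Real.exp (∑ k, |t k|) := by
  unfold obs
  have hden : 0 < pv y * Real.exp (t y) := mul_pos hy (Real.exp_pos _)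
  have hden2 : pv y * Real.exp (t y) ≤ pv x * Real.exp (t x) + pv y * Real.exp (t y) := by
    nlinarith [mul_nonneg (hpv x) (Real.exp_pos (t x)).le]
  have h1 : Real.exp (t x + t y) / (pv x * Real.exp (t x) + pv y * Real.exp (t y))
      ≤ Real.exp (t x + t y) / (pv y * Real.exp (t y)) :=
    div_le_div_of_nonneg_left (Real.exp_pos _).le hden hden2
  have h2 : Real.exp (t x + t y) / (pv y * Real.exp (t y)) = (pv y)⁻¹ * Real.exp (t x) := by
    rw [Real.exp_add]
    field_simp
  have h3 : Real.exp (t x) ≤ Real.exp (∑ k, |t k|) := by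
    apply Real.exp_le_exp.2
    calc t x ≤ |t x| := le_abs_self _
    _ ≤ ∑ k, |t k| := Finset.single_le_sum (f := fun k => |t k|) (fun k _ => abs_nonneg _) (Finset.mem_univ x)
  have hind : (if rootEdge x ∈ T ∧ connIn T x y then (1:ℝ) else 0) ≤ 1 := by
    split <;> norm_num
  have hind0 : (0:ℝ) ≤ (if rootEdge x ∈ T ∧ connIn T x y then (1:ℝ) else 0) := by
    split <;> norm_num
  calc Real.exp (t x + t y) / (pv x * Real.exp (t x) + pv y * Real.exp (t y)) *
        (if rootEdge x ∈ T ∧ connIn T x y then (1:ℝ) else 0)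
      ≤ Real.exp (t x + t y) / (pv x * Real.exp (t x) + pv y * Real.exp (t y)) * 1 := by
        apply mul_le_mul_of_nonneg_left hind
        positivity
  _ = Real.exp (t x + t y) / (pv x * Real.exp (t x) + pv y * Real.exp (t y)) := mul_one _
  _ ≤ Real.exp (t x + t y) / (pv y * Real.exp (t y)) := h1
  _ = (pv y)⁻¹ * Real.exp (t x) := h2
  _ ≤ (pv y)⁻¹ * Real.exp (∑ k, |t k|) := by
      apply mul_le_mul_of_nonneg_left h3 (by positivity)

lemma gibbs_pos (β : V → V → ℝ) (ε : V → ℝ) (t s : V → ℝ) (e : Sym2 (Option V)) :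
    0 < gibbs β ε t s e := by
  induction e using Sym2.ind with
  | _ a b =>
    unfold gibbs
    rw [esym_mk]
    positivity

lemma treeW_nonneg (G : SimpleGraph V) (β : V → V → ℝ) (hβ : ∀ i j, β i j = β j i)
    (hβpos : ∀ i j, G.Adj i j → 0 < β i j) (ε : V → ℝ) (hε : ∀ i, 0 ≤ ε i) (t : V → ℝ)
    {e : Sym2 (Option V)} (he : e ∈ (aug G).edgeSet) : 0 ≤ treeW β ε t e := by
  rcases aug_edge_cases G he with ⟨i, j, hij, rfl⟩ | ⟨i, rfl⟩
  · rw [treeW_mk β hβ]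
    have := (hβpos i j hij).le
    show 0 ≤ bres β ε (some i) (some j) * _
    unfold bres
    positivity
  · rw [rootEdge, treeW_mk β hβ]
    have := hε i
    show 0 ≤ bres β ε (some i) none * _
    unfold bres
    positivity

lemma abs_extV_le (t : V → ℝ) (a : Option V) : |extV t a| ≤ ∑ k, |t k| := by
  cases a with
  | none => simp [extV]; positivity
  | some i =>
    show |t i| ≤ _
    exact Finset.single_le_sum (f := fun k => |t k|) (fun k _ => abs_nonneg _)
      (Finset.mem_univ i)

lemma treeW_le (G : SimpleGraph V) (β : V → V → ℝ) (hβ : ∀ i j, β i j = β j i)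
    (ε : V → ℝ) (M : ℝ) (hM0 : 0 ≤ M) (hM1 : ∀ i j, β i j ≤ M) (hM2 : ∀ i, ε i ≤ M) (t : V → ℝ)
    {e : Sym2 (Option V)} (he : e ∈ (aug G).edgeSet) :
    treeW β ε t e ≤ M * Real.exp (2 * ∑ k, |t k|) := by
  have key : ∀ a b : Option V, bres β ε a b ≤ M → treeW β ε t s(a, b) ≤
      M * Real.exp (2 * ∑ k, |t k|) := by
    intro a b hab
    rw [treeW_mk β hβ]
    have h1 : Real.exp (extV t a + extV t b) ≤ Real.exp (2 * ∑ k, |t k|) := by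
      apply Real.exp_le_exp.2
      have ha := abs_extV_le t a
      have hb := abs_extV_le t b
      have ha' := le_abs_self (extV t a)
      have hb' := le_abs_self (extV t b)
      linarith
    exact mul_le_mul hab h1 (Real.exp_pos _).le hM0
  rcases aug_edge_cases G he with ⟨i, j, hij, rfl⟩ | ⟨i, rfl⟩
  · exact key _ _ (hM1 i j)
  · exact key _ _ (hM2 i)

lemma extV_cont (a : Option V) : Continuous fun u : V → ℝ => extV u a := by
  cases a with
  | none => exact continuous_const
  | some i => exact continuous_apply i

lemma gibbs_cont (β : V → V → ℝ) (ε : V → ℝ) (e : Sym2 (Option V)) :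
    Continuous fun q : (V → ℝ) × (V → ℝ) => gibbs β ε q.1 q.2 e := by
  induction e using Sym2.ind with
  | _ a b =>
    have hB : Continuous fun q : (V → ℝ) × (V → ℝ) => Bfun q.1 q.2 a b := by
      unfold Bfun
      have h1 : ∀ c : Option V, Continuous fun q : (V → ℝ) × (V → ℝ) => extV q.1 c :=
        fun c => (extV_cont c).comp continuous_fst
      have h2 : ∀ c : Option V, Continuous fun q : (V → ℝ) × (V → ℝ) => extV q.2 c :=
        fun c => (extV_cont c).comp continuous_snd
      exact ((Real.continuous_cosh.comp ((h1 a).sub (h1 b)))).add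
        ((continuous_const.mul (((h2 a).sub (h2 b)).pow 2)).mul
          (Real.continuous_exp.comp ((h1 a).add (h1 b))))
    have : (fun q : (V → ℝ) × (V → ℝ) => gibbs β ε q.1 q.2 s(a, b))
        = fun q => (Real.exp (-(bres β ε a b * (Bfun q.1 q.2 a b - 1)))
            + Real.exp (-(bres β ε b a * (Bfun q.1 q.2 b a - 1)))) / 2 := by
      funext q
      rw [gibbs, esym_mk]
    rw [this]
    have hB' : Continuous fun q : (V → ℝ) × (V → ℝ) => Bfun q.1 q.2 b a := by
      have : (fun q : (V → ℝ) × (V → ℝ) => Bfun q.1 q.2 b a)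
          = fun q => Bfun q.1 q.2 a b := by
        funext q; exact (Bfun_symm _ _ _ _).symm
      rw [this]; exact hB
    apply Continuous.div_const
    exact (Real.continuous_exp.comp ((continuous_const.mul (hB.sub continuous_const)).neg)).add
      (Real.continuous_exp.comp ((continuous_const.mul (hB'.sub continuous_const)).neg))

lemma treeW_cont (β : V → V → ℝ) (ε : V → ℝ) (e : Sym2 (Option V)) :
    Continuous fun t : V → ℝ => treeW β ε t e := by
  induction e using Sym2.ind with
  | _ a b =>
    have : (fun t : V → ℝ => treeW β ε t s(a, b))
        = fun t => (bres β ε a b * Real.exp (extV t a + extV t b)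
            + bres β ε b a * Real.exp (extV t b + extV t a)) / 2 := by
      funext t
      rw [treeW, esym_mk]
    rw [this]
    apply Continuous.div_const
    exact (continuous_const.mul (Real.continuous_exp.comp
        ((extV_cont a).add (extV_cont b)))).add
      (continuous_const.mul (Real.continuous_exp.comp ((extV_cont b).add (extV_cont a))))

lemma obs_cont (pv : V → ℝ) (hpv : ∀ i, 0 ≤ pv i) {x : V} (hx : 0 < pv x) (y : V)
    (T : Finset (Sym2 (Option V))) : Continuous fun t : V → ℝ => obs pv x y t T := by
  unfold obs
  apply Continuous.mul ?_ continuous_const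
  apply Continuous.div
  · exact Real.continuous_exp.comp ((continuous_apply x).add (continuous_apply y))
  · exact (continuous_const.mul (Real.continuous_exp.comp (continuous_apply x))).add
      (continuous_const.mul (Real.continuous_exp.comp (continuous_apply y)))
  · intro t
    have h1 : 0 < pv x * Real.exp (t x) := mul_pos hx (Real.exp_pos _)
    have h2 : 0 ≤ pv y * Real.exp (t y) := mul_nonneg (hpv y) (Real.exp_pos _).le
    nlinarith

lemma dens_nonneg (G : SimpleGraph V) (β : V → V → ℝ) (hβ : ∀ i j, β i j = β j i)
    (hβpos : ∀ i j, G.Adj i j → 0 < β i j) (ε : V → ℝ) (hε : ∀ i, 0 ≤ ε i)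
    (t s : V → ℝ) (T : Finset (Sym2 (Option V))) (hT : ↑T ⊆ (aug G).edgeSet) :
    0 ≤ dens G β ε t s T := by
  unfold dens
  apply mul_nonneg (mul_nonneg ?_ ?_) ?_
  · exact Finset.prod_nonneg fun j _ => by positivity
  · exact Finset.prod_nonneg fun e _ => (gibbs_pos β ε t s e).le
  · exact Finset.prod_nonneg fun e he => treeW_nonneg G β hβ hβpos ε hε t (hT he)

lemma densObs_cont (G : SimpleGraph V) (β : V → V → ℝ) (ε : V → ℝ)
    (pv : V → ℝ) (hpv : ∀ i, 0 ≤ pv i) {x : V} (hx : 0 < pv x) (y : V)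
    (T : Finset (Sym2 (Option V))) :
    Continuous fun q : (V → ℝ) × (V → ℝ) => dens G β ε q.1 q.2 T * obs pv x y q.1 T := by
  unfold dens
  apply Continuous.mul ?_ ((obs_cont pv hpv hx y T).comp continuous_fst)
  apply Continuous.mul
  apply Continuous.mul
  · have h1 : Continuous fun t : V → ℝ => ∏ j, Real.exp (-t j) / (2 * Real.pi) :=
      continuous_finset_prod _ fun j _ =>
        (Real.continuous_exp.comp (continuous_apply j).neg).div_const _
    exact h1.comp continuous_fst
  · exact continuous_finset_prod _ fun e _ => gibbs_cont β ε e
  · have h1 : Continuous fun t : V → ℝ => ∏ e ∈ T, treeW β ε t e :=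
      continuous_finset_prod _ fun e _ => treeW_cont β ε e
    exact h1.comp continuous_fst

-- new content
lemma mp_integral {α : Type*} [MeasurableSpace α] {μ : Measure α} {f : α → α}
    (hmp : MeasurePreserving f μ μ) {g : α → ℝ} (hg : AEStronglyMeasurable g μ) :
    ∫ t, g (f t) ∂μ = ∫ u, g u ∂μ := by
  calc ∫ t, g (f t) ∂μ = ∫ u, g u ∂(Measure.map f μ) :=
        (integral_map hmp.measurable.aemeasurable (by rwa [hmp.map_eq])).symm
  _ = _ := by rw [hmp.map_eq]

lemma sqrt_exp (z : ℝ) : Real.sqrt (Real.exp z) = Real.exp (z / 2) := by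
  rw [show Real.exp z = (Real.exp (z/2))^2 by
    rw [sq, ← Real.exp_add, add_halves], Real.sqrt_sq (Real.exp_pos _).le]

lemma gauss_shear_comp (x : V) (p : V → V) (a : V → ℝ) :
    (fun s : V → ℝ => ∏ j, Real.exp (-(a j) * (Dv x p s j)^2))
      = (fun v : V → ℝ => ∏ j, Real.exp (-(a j) * (v j)^2))
        ∘ (fun t => Matrix.toLin' (shearMat x p) t) := by
  funext s
  simp only [Function.comp]
  exact Finset.prod_congr rfl fun j _ => by rw [shear_apply]; rfl

lemma gauss_cont (a : V → ℝ) :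
    Continuous (fun v : V → ℝ => ∏ j, Real.exp (-(a j) * (v j)^2)) :=
  continuous_finset_prod _ fun j _ =>
    Real.continuous_exp.comp (continuous_const.mul ((continuous_apply j).pow 2))

lemma gauss_shear_integrable (x : V) (p : V → V) (φ : V → ℕ) (hinj : Function.Injective φ)
    (hφ : ∀ j, j ≠ x → φ (p j) < φ j) (a : V → ℝ) (ha : ∀ j, 0 < a j) :
    Integrable (fun s : V → ℝ => ∏ j, Real.exp (-(a j) * (Dv x p s j)^2)) := by
  rw [gauss_shear_comp]
  exact ((shear_mp x p φ hinj hφ).integrable_comp (gauss_cont a).aestronglyMeasurable).2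
    (Integrable.fintype_prod (fun j => integrable_exp_neg_mul_sq (ha j)))

lemma gauss_shear_integral (x : V) (p : V → V) (φ : V → ℕ) (hinj : Function.Injective φ)
    (hφ : ∀ j, j ≠ x → φ (p j) < φ j) (a : V → ℝ) (ha : ∀ j, 0 < a j) :
    ∫ s : V → ℝ, ∏ j, Real.exp (-(a j) * (Dv x p s j)^2) = ∏ j, Real.sqrt (π / a j) := by
  rw [gauss_shear_comp]
  show (∫ t : V → ℝ,
      (fun v : V → ℝ => ∏ j, Real.exp (-(a j) * (v j)^2)) (Matrix.toLin' (shearMat x p) t)) = _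
  rw [mp_integral (shear_mp x p φ hinj hφ) (gauss_cont a).aestronglyMeasurable]
  rw [MeasureTheory.volume_pi, MeasureTheory.integral_fintype_prod_eq_prod (f := fun j (v : ℝ) => Real.exp (-(a j) * v^2))]
  exact Finset.prod_congr rfl fun j _ => integral_gaussian (a j)

lemma integrable_densObs (G : SimpleGraph V) (hG : G.Connected)
    (β : V → V → ℝ) (hβsymm : ∀ i j, β i j = β j i) (hβpos : ∀ i j, G.Adj i j → 0 < β i j)
    (x y : V) (pv : V → ℝ) (hpv : ∀ i, 0 ≤ pv i) (hpx : 0 < pv x) (hpy : 0 < pv y)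
    (c : ℝ) (hc : 0 < c) (T : Finset (Sym2 (Option V))) (hT : ↑T ⊆ (aug G).edgeSet) :
    Integrable (fun q : (V → ℝ) × (V → ℝ) =>
      dens G β (singlePin x c) q.1 q.2 T * obs pv x y q.1 T) := by
  classical
  -- parent structure from connectivity
  have hpar : ∀ j : V, ∃ k : V, j ≠ x → (G.Adj j k ∧ G.dist x k < G.dist x j) := by
    intro j
    by_cases hj : j = x
    · exact ⟨x, fun h => absurd hj h⟩
    · have hd : G.dist j x ≠ 0 := by
        have := hG.pos_dist_of_ne hj
        omega
      obtain ⟨w, hw⟩ := SimpleGraph.exists_walk_of_dist_ne_zero hd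
      cases w with
      | nil => exact absurd rfl hj
      | @cons _ k _ h q =>
        refine ⟨k, fun _ => ⟨h, ?_⟩⟩
        have h1 : G.dist k x ≤ q.length := SimpleGraph.dist_le q
        have h2 : q.length + 1 = G.dist j x := by simpa using hw
        rw [SimpleGraph.dist_comm (u := x) (v := k), SimpleGraph.dist_comm (u := x) (v := j)]
        omega
  choose p hp using hpar
  set r : V → ℕ := fun j => G.dist x j with hrdef
  have hpr : ∀ j, j ≠ x → r (p j) < r j := fun j hj => (hp j hj).2
  have hadj : ∀ j, j ≠ x → G.Adj j (p j) := fun j hj => (hp j hj).1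
  obtain ⟨φ, hinj, hφ⟩ := exists_phi x p r hpr
  set n : ℕ := Fintype.card V with hndef
  set A : ℝ := 2 * T.card + 2 with hAdef
  have hA0 : 0 ≤ A := by positivity
  set b : V → ℝ := fun j => if j = x then c else β j (p j) with hbdef
  have hb : ∀ j, 0 < b j := by
    intro j
    by_cases hj : j = x
    · simpa [hbdef, hj] using hc
    · simpa [hbdef, hj] using hβpos j (p j) (hadj j hj)
  set ev : (V → ℝ) → V → ℝ := fun t j => if j = x then t x else t j + t (p j) with hevdef
  set ga : (V → ℝ) → V → ℝ := fun t j => b j * Real.exp (ev t j) / 2 with hgadef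
  have hga : ∀ t j, 0 < ga t j := fun t j => by
    have := hb j; have := Real.exp_pos (ev t j); positivity
  set Φ₀ : (V → ℝ) → ℝ := fun t => ∏ j, Real.exp (-(b j * (Real.cosh (Dv x p t j) - 1)))
    with hΦ₀def
  have hΦ₀pos : ∀ t, 0 < Φ₀ t := fun t => Finset.prod_pos fun j _ => Real.exp_pos _
  set Ψ : (V → ℝ) → (V → ℝ) → ℝ := fun t s => ∏ j, Real.exp (-(ga t j) * (Dv x p s j)^2)
    with hΨdef
  have hΨpos : ∀ t s, 0 < Ψ t s := fun t s => Finset.prod_pos fun j _ => Real.exp_pos _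
  set M : ℝ := (∑ i, ∑ j, |β i j|) + c + 1 with hMdef
  have hM0 : 0 ≤ M := by
    have : (0:ℝ) ≤ ∑ i, ∑ j, |β i j| :=
      Finset.sum_nonneg fun i _ => Finset.sum_nonneg fun j _ => abs_nonneg _
    linarith
  have hM1 : ∀ i j, β i j ≤ M := by
    intro i j
    have h1 : β i j ≤ |β i j| := le_abs_self _
    have h2 : |β i j| ≤ ∑ j', |β i j'| :=
      Finset.single_le_sum (f := fun j' => |β i j'|) (fun k _ => abs_nonneg _)
        (Finset.mem_univ j)
    have h3 : ∑ j', |β i j'| ≤ ∑ i', ∑ j', |β i' j'| :=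
      Finset.single_le_sum (f := fun i' => ∑ j', |β i' j'|)
        (fun k _ => Finset.sum_nonneg fun l _ => abs_nonneg _) (Finset.mem_univ i)
    rw [hMdef]
    linarith
  have hM2 : ∀ i, singlePin x c i ≤ M := by
    intro i
    have : (0:ℝ) ≤ ∑ i', ∑ j', |β i' j'| :=
      Finset.sum_nonneg fun i' _ => Finset.sum_nonneg fun j' _ => abs_nonneg _
    unfold singlePin
    rw [hMdef]
    split <;> linarith
  set K : ℝ := (∏ _j : V, (1/(2*Real.pi))) * M ^ T.card * (pv y)⁻¹ with hKdef
  have hK0 : 0 ≤ K := by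
    have : (0:ℝ) ≤ ∏ _j : V, (1/(2*Real.pi)) :=
      Finset.prod_nonneg fun j _ => by positivity
    positivity
  -- pointwise bound
  have hsp : ∀ i, 0 ≤ singlePin x c i := by
    intro i; unfold singlePin; split
    · exact hc.le
    · rfl
  have hpoint : ∀ (t s : V → ℝ), dens G β (singlePin x c) t s T * obs pv x y t T
      ≤ K * (Real.exp (A * ∑ k, |t k|) * Φ₀ t) * Ψ t s := by
    intro t s
    have hSt0 : 0 ≤ ∑ k, |t k| := Finset.sum_nonneg fun k _ => abs_nonneg _
    have hsum : ∀ k, |t k| ≤ ∑ k', |t k'| := fun k =>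
      Finset.single_le_sum (f := fun k' => |t k'|) (fun k' _ => abs_nonneg _) (Finset.mem_univ k)
    -- the 2π-factor
    have hprod2pi : (0:ℝ) ≤ ∏ _j : V, 1 / (2 * Real.pi) :=
      Finset.prod_nonneg fun j _ => by positivity
    have hP1 : ∏ j, Real.exp (-t j) / (2 * Real.pi)
        ≤ (∏ _j : V, 1 / (2 * Real.pi)) * Real.exp (∑ k, |t k|) := by
      have e1 : ∏ j, Real.exp (-t j) / (2 * Real.pi)
          = (∏ _j : V, 1 / (2 * Real.pi)) * Real.exp (∑ j, -t j) := by
        rw [Real.exp_sum, ← Finset.prod_mul_distrib]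
        exact Finset.prod_congr rfl fun j _ => by ring
      rw [e1]
      apply mul_le_mul_of_nonneg_left _ hprod2pi
      exact Real.exp_le_exp.2 (Finset.sum_le_sum fun j _ => neg_le_abs _)
    have hP1nn : (0:ℝ) ≤ ∏ j, Real.exp (-t j) / (2 * Real.pi) :=
      Finset.prod_nonneg fun j _ => by positivity
    -- gibbs factors are at most 1
    have hgibbs_le_one : ∀ e ∈ Finset.univ.filter (fun e : Sym2 (Option V) =>
        e ∈ (aug G).edgeSet), gibbs β (singlePin x c) t s e ≤ 1 := by
      intro e he
      rw [Finset.mem_filter] at he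
      have key : ∀ a b' : Option V, 0 ≤ bres β (singlePin x c) a b' →
          gibbs β (singlePin x c) t s s(a, b') ≤ 1 := by
        intro a b' hbr
        rw [gibbs_mk β hβsymm, Real.exp_le_one_iff]
        have h1 := one_le_Bfun t s a b'
        nlinarith
      rcases aug_edge_cases G he.2 with ⟨i, j, hij, rfl⟩ | ⟨i, rfl⟩
      · exact key _ _ (hβpos i j hij).le
      · exact key _ _ (hsp i)
    -- the chosen subset of edges
    have hroot_notmem : rootEdge x ∉ (Finset.univ.erase x).image
        (fun j => s(some j, some (p j))) := by
      rw [Finset.mem_image]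
      rintro ⟨j, hj, heq⟩
      have h1 : (none : Option V) ∈ s(some j, some (p j)) := by
        rw [heq, rootEdge]
        simp
      simp at h1
    set S : Finset (Sym2 (Option V)) := insert (rootEdge x)
      ((Finset.univ.erase x).image (fun j => s(some j, some (p j)))) with hSdef
    have hSsub : S ⊆ Finset.univ.filter (fun e : Sym2 (Option V) =>
        e ∈ (aug G).edgeSet) := by
      intro e he
      rw [Finset.mem_filter]
      refine ⟨Finset.mem_univ _, ?_⟩
      rcases Finset.mem_insert.1 he with rfl | he'
      · exact mem_aug_root G x
      · obtain ⟨j, hj, rfl⟩ := Finset.mem_image.1 he'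
        exact mem_aug_edge G (hadj j (Finset.mem_erase.1 hj).1)
    have hP2a : ∏ e ∈ Finset.univ.filter (fun e : Sym2 (Option V) =>
        e ∈ (aug G).edgeSet), gibbs β (singlePin x c) t s e
        ≤ ∏ e ∈ S, gibbs β (singlePin x c) t s e := by
      rw [← Finset.prod_sdiff hSsub]
      have h1 : ∏ e ∈ (Finset.univ.filter (fun e : Sym2 (Option V) =>
          e ∈ (aug G).edgeSet)) \ S, gibbs β (singlePin x c) t s e ≤ 1 :=
        Finset.prod_le_one (fun e _ => (gibbs_pos β _ t s e).le)
          (fun e he => hgibbs_le_one e (Finset.mem_sdiff.1 he).1)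
      have h2 : (0:ℝ) ≤ ∏ e ∈ S, gibbs β (singlePin x c) t s e :=
        Finset.prod_nonneg fun e _ => (gibbs_pos β _ t s e).le
      nlinarith [mul_le_mul_of_nonneg_right h1 h2]
    have hinjmap : ∀ j ∈ Finset.univ.erase x, ∀ j' ∈ Finset.univ.erase x,
        s(some j, some (p j)) = s(some j', some (p j')) → j = j' := by
      intro j hj j' hj' heq
      rw [Sym2.eq_iff] at heq
      rcases heq with ⟨h1, _⟩ | ⟨h1, h2⟩
      · exact Option.some.inj h1
      · exfalso
        have hjx := (Finset.mem_erase.1 hj).1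
        have hjx' := (Finset.mem_erase.1 hj').1
        have e1 : j = p j' := Option.some.inj h1
        have e2 : p j = j' := Option.some.inj h2
        have d1 := hpr j hjx
        have d2 := hpr j' hjx'
        rw [e2] at d1
        rw [← e1] at d2
        omega
    have hprodS : ∏ e ∈ S, gibbs β (singlePin x c) t s e = Φ₀ t * Ψ t s := by
      rw [hSdef, Finset.prod_insert hroot_notmem, Finset.prod_image hinjmap]
      have hfx : gibbs β (singlePin x c) t s (rootEdge x)
          = Real.exp (-(b x * (Real.cosh (Dv x p t x) - 1)))
            * Real.exp (-(ga t x) * (Dv x p s x)^2) := by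
        rw [rootEdge, gibbs_mk β hβsymm, ← Real.exp_add]
        congr 1
        show -(bres β (singlePin x c) (some x) none * (Bfun t s (some x) none - 1)) = _
        have hbx : bres β (singlePin x c) (some x) none = c := by
          show singlePin x c x = c
          simp [singlePin]
        rw [hbx]
        unfold Bfun extV Dv
        simp only [hgadef, hevdef, hbdef, Option.elim, eq_self_iff_true, if_true]
        ring
      have hfj : ∀ j ∈ Finset.univ.erase x, gibbs β (singlePin x c) t s
          s(some j, some (p j))
          = Real.exp (-(b j * (Real.cosh (Dv x p t j) - 1)))
            * Real.exp (-(ga t j) * (Dv x p s j)^2) := by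
        intro j hj
        have hjx := (Finset.mem_erase.1 hj).1
        rw [gibbs_mk β hβsymm, ← Real.exp_add]
        congr 1
        show -(bres β (singlePin x c) (some j) (some (p j)) * (Bfun t s (some j)
          (some (p j)) - 1)) = _
        have hbj : bres β (singlePin x c) (some j) (some (p j)) = β j (p j) := rfl
        rw [hbj]
        unfold Bfun extV Dv
        simp only [hgadef, hevdef, hbdef, Option.elim, if_neg hjx]
        ring
      rw [hfx, Finset.prod_congr rfl hfj, Finset.prod_mul_distrib]
      simp only [hΦ₀def, hΨdef]
      rw [← Finset.mul_prod_erase Finset.univ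
        (fun j => Real.exp (-(b j * (Real.cosh (Dv x p t j) - 1)))) (Finset.mem_univ x)]
      rw [← Finset.mul_prod_erase Finset.univ
        (fun j => Real.exp (-(ga t j) * (Dv x p s j)^2)) (Finset.mem_univ x)]
      ring
    -- tree factor
    have hP3 : ∏ e ∈ T, treeW β (singlePin x c) t e
        ≤ M ^ T.card * Real.exp (2 * T.card * ∑ k, |t k|) := by
      calc ∏ e ∈ T, treeW β (singlePin x c) t e
          ≤ ∏ _e ∈ T, (M * Real.exp (2 * ∑ k, |t k|)) :=
            Finset.prod_le_prod
              (fun e he => treeW_nonneg G β hβsymm hβpos _ hsp t (hT he))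
              (fun e he => treeW_le G β hβsymm _ M hM0 hM1 hM2 t (hT he))
      _ = (M * Real.exp (2 * ∑ k, |t k|)) ^ T.card := Finset.prod_const _
      _ = M ^ T.card * Real.exp (2 * T.card * ∑ k, |t k|) := by
            rw [mul_pow, ← Real.exp_nat_mul]
            congr 2
            ring
    have hP3nn : (0:ℝ) ≤ ∏ e ∈ T, treeW β (singlePin x c) t e :=
      Finset.prod_nonneg fun e he => treeW_nonneg G β hβsymm hβpos _ hsp t (hT he)
    have hO := obs_le pv hpv hpx hpy t T
    have hO0 := obs_nonneg pv hpv hpx y t T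
    have hP2nn : (0:ℝ) ≤ ∏ e ∈ Finset.univ.filter (fun e : Sym2 (Option V) =>
        e ∈ (aug G).edgeSet), gibbs β (singlePin x c) t s e :=
      Finset.prod_nonneg fun e _ => (gibbs_pos β _ t s e).le
    have hΦΨnn : (0:ℝ) ≤ Φ₀ t * Ψ t s := mul_nonneg (hΦ₀pos t).le (hΨpos t s).le
    have hQ1nn : (0:ℝ) ≤ (∏ _j : V, 1 / (2 * Real.pi)) * Real.exp (∑ k, |t k|) :=
      mul_nonneg hprod2pi (Real.exp_pos _).le
    have m1 : (∏ j, Real.exp (-t j) / (2 * Real.pi)) *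
        ∏ e ∈ Finset.univ.filter (fun e : Sym2 (Option V) => e ∈ (aug G).edgeSet),
          gibbs β (singlePin x c) t s e
        ≤ ((∏ _j : V, 1 / (2 * Real.pi)) * Real.exp (∑ k, |t k|)) * (Φ₀ t * Ψ t s) :=
      mul_le_mul hP1 (hP2a.trans (le_of_eq hprodS)) hP2nn hQ1nn
    have hQ3nn : (0:ℝ) ≤ M ^ T.card * Real.exp (2 * T.card * ∑ k, |t k|) := by positivity
    have m2 := mul_le_mul m1 hP3 hP3nn (mul_nonneg hQ1nn hΦΨnn)
    have m3 := mul_le_mul m2 hO hO0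
      (mul_nonneg (mul_nonneg hQ1nn hΦΨnn) hQ3nn)
    unfold dens
    refine le_trans m3 (le_of_eq ?_)
    have hexpA : Real.exp (A * ∑ k, |t k|) = Real.exp (∑ k, |t k|)
        * Real.exp (2 * T.card * ∑ k, |t k|) * Real.exp (∑ k, |t k|) := by
      rw [← Real.exp_add, ← Real.exp_add]
      congr 1
      rw [hAdef]
      push_cast
      ring
    rw [hKdef, hexpA]
    ring
  -- integrability of the bound
  have hΦcont : Continuous Φ₀ := by
    rw [hΦ₀def]
    exact continuous_finset_prod _ fun j _ => Real.continuous_exp.comp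
      ((continuous_const.mul ((Real.continuous_cosh.comp (Dv_continuous x p j)).sub
        continuous_const)).neg)
  have hexpAcont : Continuous fun t : V → ℝ => Real.exp (A * ∑ k, |t k|) :=
    Real.continuous_exp.comp (continuous_const.mul
      (continuous_finset_sum _ fun k _ => (continuous_apply k).abs))
  have hgacont : ∀ j, Continuous fun t : V → ℝ => ga t j := by
    intro j
    by_cases hj : j = x <;>
      simp only [hgadef, hevdef, hj, if_true, if_false] <;> fun_prop
  have hΨcont : Continuous fun q : (V → ℝ) × (V → ℝ) => Ψ q.1 q.2 := by
    rw [hΨdef]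
    exact continuous_finset_prod _ fun j _ => Real.continuous_exp.comp
      ((((hgacont j).comp continuous_fst).neg).mul
        (((Dv_continuous x p j).comp continuous_snd).pow 2))
  have hbound_int : Integrable (fun q : (V → ℝ) × (V → ℝ) =>
      K * (Real.exp (A * ∑ k, |q.1 k|) * Φ₀ q.1) * Ψ q.1 q.2) := by
    rw [show (volume : Measure ((V → ℝ) × (V → ℝ)))
        = (volume : Measure (V → ℝ)).prod volume from MeasureTheory.Measure.volume_eq_prod _ _]
    have hmeas : AEStronglyMeasurable (fun q : (V → ℝ) × (V → ℝ) =>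
        K * (Real.exp (A * ∑ k, |q.1 k|) * Φ₀ q.1) * Ψ q.1 q.2)
        ((volume : Measure (V → ℝ)).prod volume) :=
      ((continuous_const.mul ((hexpAcont.comp continuous_fst).mul
        (hΦcont.comp continuous_fst))).mul hΨcont).aestronglyMeasurable
    refine (integrable_prod_iff hmeas).2 ⟨Filter.Eventually.of_forall fun t => ?_, ?_⟩
    · have := ((gauss_shear_integrable x p φ hinj hφ (ga t) (hga t))).const_mul
        (K * (Real.exp (A * ∑ k, |t k|) * Φ₀ t))
      simpa [hΨdef] using this
    · have hval : (fun t : V → ℝ => ∫ s : V → ℝ,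
          ‖K * (Real.exp (A * ∑ k, |t k|) * Φ₀ t) * Ψ t s‖)
          = fun t => (K * (Real.exp (A * ∑ k, |t k|) * Φ₀ t)) * ∏ j, Real.sqrt (π / ga t j) := by
        funext t
        have h1 : ∀ s : V → ℝ, ‖K * (Real.exp (A * ∑ k, |t k|) * Φ₀ t) * Ψ t s‖
            = (K * (Real.exp (A * ∑ k, |t k|) * Φ₀ t)) * Ψ t s := by
          intro s
          rw [Real.norm_eq_abs, abs_of_nonneg]
          exact mul_nonneg (mul_nonneg hK0
            (mul_nonneg (Real.exp_pos _).le (hΦ₀pos t).le)) (hΨpos t s).le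
        simp_rw [h1]
        rw [MeasureTheory.integral_const_mul]
        rw [hΨdef]
        rw [gauss_shear_integral x p φ hinj hφ (ga t) (hga t)]
      rw [hval]
      set Kb : ℝ := K * ∏ j, Real.sqrt (2 * Real.pi / b j) with hKbdef
      have hKb0 : 0 ≤ Kb :=
        mul_nonneg hK0 (Finset.prod_nonneg fun j _ => Real.sqrt_nonneg _)
      have hmaster := (integrable_master x p r hpr b hb (A + n) (by positivity)).const_mul Kb
      refine hmaster.mono' ?_ (Filter.Eventually.of_forall fun t => ?_)
      · refine Continuous.aestronglyMeasurable ?_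
        refine (continuous_const.mul (hexpAcont.mul hΦcont)).mul
          (continuous_finset_prod _ fun j _ => ?_)
        exact Real.continuous_sqrt.comp
          (Continuous.div continuous_const (hgacont j) (fun t => (hga t j).ne'))
      · have hsum : ∀ k, |t k| ≤ ∑ k', |t k'| := fun k =>
          Finset.single_le_sum (f := fun k' => |t k'|) (fun k' _ => abs_nonneg _)
            (Finset.mem_univ k)
        have hsum0 : 0 ≤ ∑ k', |t k'| := Finset.sum_nonneg fun k _ => abs_nonneg _
        have hkey : ∀ j, Real.sqrt (π / ga t j)
            ≤ Real.sqrt (2 * Real.pi / b j) * Real.exp (∑ k', |t k'|) := by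
          intro j
          have hgaval : π / ga t j = (2 * Real.pi / b j) * Real.exp (-(ev t j)) := by
            rw [hgadef, Real.exp_neg]
            have h2 := (Real.exp_pos (ev t j)).ne'
            have h3 := (hb j).ne'
            field_simp
          rw [hgaval, Real.sqrt_mul (by have := hb j; positivity), sqrt_exp]
          have : Real.exp (-(ev t j) / 2) ≤ Real.exp (∑ k', |t k'|) := by
            apply Real.exp_le_exp.2
            rw [hevdef]
            by_cases hj : j = x
            · simp only [hj, if_true]
              have := hsum x
              have := abs_nonneg (t x)
              have := neg_le_abs (t x)
              linarith
            · simp only [hj, if_false]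
              have h1 := hsum j
              have h2 := hsum (p j)
              have h3 := neg_le_abs (t j)
              have h4 := neg_le_abs (t (p j))
              linarith
          exact mul_le_mul_of_nonneg_left this (Real.sqrt_nonneg _)
        have hprodle : ∏ j, Real.sqrt (π / ga t j)
            ≤ (∏ j, Real.sqrt (2 * Real.pi / b j)) * Real.exp ((n : ℝ) * ∑ k', |t k'|) := by
          calc ∏ j, Real.sqrt (π / ga t j)
              ≤ ∏ j, (Real.sqrt (2 * Real.pi / b j) * Real.exp (∑ k', |t k'|)) :=
                Finset.prod_le_prod (fun j _ => Real.sqrt_nonneg _) (fun j _ => hkey j)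
          _ = (∏ j, Real.sqrt (2 * Real.pi / b j)) * Real.exp (∑ k', |t k'|) ^ n := by
                rw [Finset.prod_mul_distrib, Finset.prod_const, Finset.card_univ, hndef]
          _ = _ := by rw [← Real.exp_nat_mul]
        rw [Real.norm_eq_abs, abs_of_nonneg (mul_nonneg (mul_nonneg hK0
          (mul_nonneg (Real.exp_pos _).le (hΦ₀pos t).le))
          (Finset.prod_nonneg fun j _ => Real.sqrt_nonneg _))]
        calc (K * (Real.exp (A * ∑ k, |t k|) * Φ₀ t)) * ∏ j, Real.sqrt (π / ga t j)
            ≤ (K * (Real.exp (A * ∑ k, |t k|) * Φ₀ t)) *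
              ((∏ j, Real.sqrt (2 * Real.pi / b j)) * Real.exp ((n : ℝ) * ∑ k', |t k'|)) := by
              apply mul_le_mul_of_nonneg_left hprodle
              exact mul_nonneg hK0 (mul_nonneg (Real.exp_pos _).le (hΦ₀pos t).le)
        _ = Kb * (Real.exp ((A + n) * ∑ k, |t k|) * Φ₀ t) := by
              rw [hKbdef, show (A + (n:ℝ)) * ∑ k, |t k|
                = A * ∑ k, |t k| + (n:ℝ) * ∑ k, |t k| by ring, Real.exp_add]
              ring
  refine hbound_int.mono'
    (densObs_cont G β (singlePin x c) pv hpv hpx y T).aestronglyMeasurable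
    (Filter.Eventually.of_forall fun q => ?_)
  rw [Real.norm_eq_abs, abs_of_nonneg (mul_nonneg
    (dens_nonneg G β hβsymm hβpos (singlePin x c)
      (fun i => by unfold singlePin; split <;> [exact hc.le; rfl]) q.1 q.2 T hT)
    (obs_nonneg pv hpv hpx y q.1 T))]
  exact hpoint q.1 q.2

end Aux

end H22

namespace H22

/-- contribution of one root, fixed `ε`: for all `ε > 0`, with pinning
`ε = (π_i ε)_{i∈V}`,
`E_{μ^ε}[O^π_{xy} 1{R(T)={x}}] ≤ e^{Σ_{i∈V∖{x}} ε_i} E_{μ^{ε_xδ_x}}[O^π_{xy}]`. -/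
theorem stmt_8 {V : Type*} [Fintype V] [DecidableEq V]
    (G : SimpleGraph V) (hG : G.Connected)
    (β : V → V → ℝ) (hβsymm : ∀ i j, β i j = β j i)
    (hβpos : ∀ i j, G.Adj i j → 0 < β i j)
    (x y : V) (hxy : x ≠ y)
    (pv : V → ℝ) (hpv : ∀ i, 0 ≤ pv i) (hpx : 0 < pv x) (hpy : 0 < pv y)
    (ε : ℝ) (hε : 0 < ε) :
    expect G β (pinOf pv ε)
        (fun t _ T => obs pv x y t T * (if roots T = {x} then 1 else 0))
      ≤ Real.exp (∑ i ∈ Finset.univ.erase x, pv i * ε) *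
          expect G β (singlePin x (pv x * ε)) (fun t _ T => obs pv x y t T) := by
  classical
  set c : ℝ := pv x * ε with hcdef
  have hc : 0 < c := mul_pos hpx hε
  have hC1 : (1:ℝ) ≤ Real.exp (∑ i ∈ Finset.univ.erase x, pv i * ε) :=
    Real.one_le_exp (Finset.sum_nonneg fun i _ => mul_nonneg (hpv i) hε.le)
  have hsp : ∀ i, 0 ≤ singlePin x c i := by
    intro i; unfold singlePin; split
    · exact hc.le
    · rfl
  have hpin : ∀ i, 0 ≤ pinOf pv ε i := fun i => mul_nonneg (hpv i) hε.le
  unfold expect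
  rw [Finset.mul_sum]
  apply Finset.sum_le_sum
  intro T hT
  have hTsub : ↑T ⊆ (aug G).edgeSet :=
    ((Finset.mem_filter.1 hT).2 : IsSpanningTree (aug G) T).1
  have hRHSnn : 0 ≤ ∫ q : (V → ℝ) × (V → ℝ),
      dens G β (singlePin x c) q.1 q.2 T * obs pv x y q.1 T :=
    integral_nonneg fun q => mul_nonneg
      (dens_nonneg G β hβsymm hβpos _ hsp q.1 q.2 T hTsub)
      (obs_nonneg pv hpv hpx y q.1 T)
  by_cases hroot : roots T = {x}
  · -- main case
    have hrootedge : ∀ i : V, rootEdge i ∈ T → i = x := by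
      intro i hi
      have h1 : i ∈ roots T := Finset.mem_filter.2 ⟨Finset.mem_univ _, hi⟩
      rw [hroot] at h1
      simpa using h1
    have hpt : ∀ q : (V → ℝ) × (V → ℝ),
        dens G β (pinOf pv ε) q.1 q.2 T *
          (obs pv x y q.1 T * (if roots T = {x} then 1 else 0))
        ≤ dens G β (singlePin x c) q.1 q.2 T * obs pv x y q.1 T := by
      rintro ⟨t, s⟩
      rw [if_pos hroot, mul_one]
      apply mul_le_mul_of_nonneg_right ?_ (obs_nonneg pv hpv hpx y t T)
      unfold dens
      have htree : ∏ e ∈ T, treeW β (pinOf pv ε) t e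
          = ∏ e ∈ T, treeW β (singlePin x c) t e := by
        refine Finset.prod_congr rfl fun e he => ?_
        rcases aug_edge_cases G (hTsub he) with ⟨i, j, hij, rfl⟩ | ⟨i, rfl⟩
        · rfl
        · have hix : i = x := hrootedge i he
          rw [rootEdge, treeW_mk β hβsymm, treeW_mk β hβsymm]
          have : bres β (pinOf pv ε) (some i) none = bres β (singlePin x c) (some i) none := by
            show pinOf pv ε i = singlePin x c i
            rw [hix]
            simp [pinOf, singlePin, hcdef]
          rw [this]
      have hgibbs : ∏ e ∈ Finset.univ.filter (fun e : Sym2 (Option V) =>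
            e ∈ (aug G).edgeSet), gibbs β (pinOf pv ε) t s e
          ≤ ∏ e ∈ Finset.univ.filter (fun e : Sym2 (Option V) =>
            e ∈ (aug G).edgeSet), gibbs β (singlePin x c) t s e := by
        refine Finset.prod_le_prod (fun e _ => (gibbs_pos β _ t s e).le) (fun e he => ?_)
        rcases aug_edge_cases G (Finset.mem_filter.1 he).2 with ⟨i, j, hij, rfl⟩ | ⟨i, rfl⟩
        · exact le_of_eq rfl
        · by_cases hix : i = x
          · rw [rootEdge, gibbs_mk β hβsymm, gibbs_mk β hβsymm]
            have : bres β (pinOf pv ε) (some i) none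
                = bres β (singlePin x c) (some i) none := by
              show pinOf pv ε i = singlePin x c i
              rw [hix]
              simp [pinOf, singlePin, hcdef]
            rw [this]
          · rw [rootEdge, gibbs_mk β hβsymm, gibbs_mk β hβsymm]
            have h1 : bres β (singlePin x c) (some i) none = 0 := by
              show singlePin x c i = 0
              simp [singlePin, hix]
            rw [h1]
            have hB := one_le_Bfun t s (some i) none
            have hbr : 0 ≤ bres β (pinOf pv ε) (some i) none := hpin i
            calc Real.exp (-(bres β (pinOf pv ε) (some i) none * (Bfun t s (some i) none - 1)))
                ≤ 1 := Real.exp_le_one_iff.2 (by nlinarith)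
            _ = Real.exp (-(0 * (Bfun t s (some i) none - 1))) := by norm_num
      rw [htree]
      apply mul_le_mul_of_nonneg_right ?_
        (Finset.prod_nonneg fun e he => treeW_nonneg G β hβsymm hβpos _ hsp t (hTsub he))
      apply mul_le_mul_of_nonneg_left hgibbs
      exact Finset.prod_nonneg fun j _ => by positivity
    have hLHSnn : ∀ q : (V → ℝ) × (V → ℝ), 0 ≤ dens G β (pinOf pv ε) q.1 q.2 T *
        (obs pv x y q.1 T * (if roots T = {x} then 1 else 0)) := by
      intro q
      refine mul_nonneg (dens_nonneg G β hβsymm hβpos _ hpin q.1 q.2 T hTsub)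
        (mul_nonneg (obs_nonneg pv hpv hpx y q.1 T) ?_)
      split <;> norm_num
    have hint := integrable_densObs G hG β hβsymm hβpos x y pv hpv hpx hpy c hc T hTsub
    have hle : (∫ q : (V → ℝ) × (V → ℝ), dens G β (pinOf pv ε) q.1 q.2 T *
          (obs pv x y q.1 T * (if roots T = {x} then 1 else 0)))
        ≤ ∫ q : (V → ℝ) × (V → ℝ), dens G β (singlePin x c) q.1 q.2 T * obs pv x y q.1 T :=
      integral_mono_of_nonneg (Filter.Eventually.of_forall hLHSnn) hint
        (Filter.Eventually.of_forall hpt)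
    calc (∫ q : (V → ℝ) × (V → ℝ), dens G β (pinOf pv ε) q.1 q.2 T *
          (obs pv x y q.1 T * (if roots T = {x} then 1 else 0)))
        ≤ ∫ q : (V → ℝ) × (V → ℝ), dens G β (singlePin x c) q.1 q.2 T * obs pv x y q.1 T :=
          hle
    _ ≤ Real.exp (∑ i ∈ Finset.univ.erase x, pv i * ε) *
          ∫ q : (V → ℝ) × (V → ℝ), dens G β (singlePin x c) q.1 q.2 T * obs pv x y q.1 T :=
        le_mul_of_one_le_left hRHSnn hC1
  · -- roots T ≠ {x}: left term is zero
    have hzero : (∫ q : (V → ℝ) × (V → ℝ), dens G β (pinOf pv ε) q.1 q.2 T *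
        (obs pv x y q.1 T * (if roots T = {x} then 1 else 0))) = 0 := by
      have : ∀ q : (V → ℝ) × (V → ℝ), dens G β (pinOf pv ε) q.1 q.2 T *
          (obs pv x y q.1 T * (if roots T = {x} then 1 else 0)) = 0 := by
        intro q
        rw [if_neg hroot]
        ring
      simp only [this, integral_zero]
    calc (∫ q : (V → ℝ) × (V → ℝ), dens G β (pinOf pv ε) q.1 q.2 T *
          (obs pv x y q.1 T * (if roots T = {x} then 1 else 0))) = 0 := hzero
    _ ≤ Real.exp (∑ i ∈ Finset.univ.erase x, pv i * ε) *
          ∫ q : (V → ℝ) × (V → ℝ), dens G β (singlePin x c) q.1 q.2 T * obs pv x y q.1 T :=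
        mul_nonneg (Real.exp_pos _).le hRHSnn

end H22
end

section
/- For every ε>0, ∫_{ℝ²} exp[−ε(cosh t − 1 + ½ s² e^{t})] ds dt = 2π/ε; equivalently, the function (t,s) ↦ (ε/(2π)) exp[−ε(cosh t − 1 + ½ s² e^{t})] is a probability density on ℝ². -/
open MeasureTheory Real

lemma s16_cosh_half (t : ℝ) : Real.cosh t - 1 = 2 * Real.sinh (t/2)^2 := by
  have h := Real.cosh_two_mul (t/2)
  have h2 := Real.cosh_sq (t/2)
  have ht : (2:ℝ) * (t/2) = t := by ring
  rw [ht] at h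
  linarith

lemma s16_cosh_half' (t : ℝ) : Real.cosh t + 1 = 2 * Real.cosh (t/2)^2 := by
  have h := Real.cosh_two_mul (t/2)
  have h2 := Real.cosh_sq (t/2)
  have ht : (2:ℝ) * (t/2) = t := by ring
  rw [ht] at h
  linarith

lemma s16_sq_le (t : ℝ) : t^2/2 ≤ Real.cosh t - 1 := by
  rw [s16_cosh_half]
  have h1 : |t/2| ≤ Real.sinh |t/2| := Real.self_le_sinh_iff.mpr (abs_nonneg _)
  have h2 : Real.sinh |t/2| = |Real.sinh (t/2)| := (Real.abs_sinh _).symm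
  have h3 : (t/2)^2 ≤ Real.sinh (t/2)^2 := by
    rw [← sq_abs (t/2), ← sq_abs (Real.sinh (t/2))]
    exact pow_le_pow_left₀ (abs_nonneg _) (h1.trans_eq h2) 2
  nlinarith

lemma s16_h_integrable {ε : ℝ} (hε : 0 < ε) :
    Integrable (fun t : ℝ => Real.exp (-(ε * (Real.cosh t - 1)) - t/2)) := by
  have hb : (0:ℝ) < ε/4 := by positivity
  refine (((integrable_exp_neg_mul_sq hb).const_mul (Real.exp (1/(4*ε)))).mono ?_ ?_)
  · exact (Real.continuous_exp.comp (by continuity)).aestronglyMeasurable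
  · refine Filter.Eventually.of_forall fun t => ?_
    rw [Real.norm_eq_abs, Real.norm_eq_abs, abs_of_pos (Real.exp_pos _),
      abs_of_pos (by positivity), ← Real.exp_add]
    apply Real.exp_le_exp.mpr
    have h := s16_sq_le t
    have hsq := sq_nonneg (ε*t + 1)
    have hε' : 0 < 4*ε := by linarith
    have h4 : (4*ε) * (1/(4*ε)) = 1 := by field_simp
    nlinarith [sq_nonneg (ε*t+1), mul_le_mul_of_nonneg_left h (le_of_lt hε),
      mul_pos hε hε, sq_nonneg t]

lemma s16_sqrt_exp (t : ℝ) : Real.sqrt (Real.exp (-t)) = Real.exp (-t/2) := by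
  have h : Real.exp (-t) = Real.exp (-t/2) * Real.exp (-t/2) := by
    rw [← Real.exp_add]; ring_nf
  rw [h, Real.sqrt_mul_self (Real.exp_nonneg _)]

lemma s16_inner {ε : ℝ} (hε : 0 < ε) (t : ℝ) :
    ∫ s : ℝ, Real.exp (-(ε * (Real.cosh t - 1 + (1 / 2) * s ^ 2 * Real.exp t)))
      = Real.sqrt (2*Real.pi/ε) * Real.exp (-(ε * (Real.cosh t - 1)) - t/2) := by
  have hb : (0:ℝ) < ε * Real.exp t / 2 := by positivity
  have hsplit : ∀ s : ℝ, Real.exp (-(ε * (Real.cosh t - 1 + (1 / 2) * s ^ 2 * Real.exp t)))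
      = Real.exp (-(ε * (Real.cosh t - 1))) * Real.exp (-(ε * Real.exp t / 2) * s ^ 2) := by
    intro s; rw [← Real.exp_add]; ring_nf
  simp_rw [hsplit]
  rw [integral_const_mul, integral_gaussian]
  have hval : Real.pi / (ε * Real.exp t / 2) = (2*Real.pi/ε) * Real.exp (-t) := by
    rw [Real.exp_neg]
    field_simp
  rw [hval, Real.sqrt_mul (by positivity), s16_sqrt_exp,
    show -(ε * (Real.cosh t - 1)) - t/2 = -(ε * (Real.cosh t - 1)) + (-t/2) by ring,
    Real.exp_add]
  ring

lemma s16_odd_zero {ε : ℝ} (hε : 0 < ε) :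
    ∫ w : ℝ, Real.sqrt 2 * Real.exp (-(ε * w^2)) * (w / Real.sqrt (2 + w^2)) = 0 := by
  set k : ℝ → ℝ := fun w => Real.sqrt 2 * Real.exp (-(ε * w^2)) * (w / Real.sqrt (2 + w^2)) with hk
  have hodd : ∀ w, k (-w) = - k w := by
    intro w; simp only [hk, neg_sq]; ring
  have h1 : ∫ w, k w = ∫ w, k (-w) := (integral_neg_eq_self k volume).symm
  simp_rw [hodd] at h1
  rw [integral_neg] at h1
  linarith

lemma s16_oneD {ε : ℝ} (hε : 0 < ε) :
    ∫ t : ℝ, Real.exp (-(ε * (Real.cosh t - 1)) - t/2) = Real.sqrt (2*Real.pi/ε) := by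
  set f : ℝ → ℝ := fun t => Real.sqrt 2 * Real.sinh (t/2) with hf
  set f' : ℝ → ℝ := fun t => Real.sqrt 2 * (Real.cosh (t/2) * (2:ℝ)⁻¹) with hf'
  set g : ℝ → ℝ := fun w => Real.sqrt 2 * Real.exp (-(ε * w^2)) * (1 - w / Real.sqrt (2 + w^2))
    with hg
  have s2pos : (0:ℝ) < Real.sqrt 2 := Real.sqrt_pos.mpr (by norm_num)
  have hderiv : ∀ t : ℝ, HasDerivAt f (f' t) t := by
    intro t
    have h1 : HasDerivAt (fun t : ℝ => t/2) ((2:ℝ)⁻¹) t := by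
      simpa using (hasDerivAt_id t).div_const 2
    exact ((Real.hasDerivAt_sinh (t/2)).comp t h1).const_mul (Real.sqrt 2)
  have hinj : Function.Injective f := by
    intro a b hab
    have := Real.sinh_injective (mul_left_cancel₀ s2pos.ne' hab)
    linarith
  have hrange : f '' Set.univ = Set.univ := by
    rw [Set.image_univ, Set.range_eq_univ]
    intro w
    refine ⟨2 * Real.arsinh (w / Real.sqrt 2), ?_⟩
    simp only [hf]
    rw [show 2 * Real.arsinh (w / Real.sqrt 2) / 2 = Real.arsinh (w / Real.sqrt 2) by ring,
      Real.sinh_arsinh, mul_div_cancel₀ _ s2pos.ne']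
  have key := integral_image_eq_integral_abs_deriv_smul MeasurableSet.univ
    (fun x _ => (hderiv x).hasDerivWithinAt) hinj.injOn g
  rw [hrange] at key
  simp only [setIntegral_univ] at key
  -- identify the integrand
  have heq : ∀ t : ℝ, |f' t| • g (f t) = Real.exp (-(ε * (Real.cosh t - 1)) - t/2) := by
    intro t
    have hcosh : 0 < Real.cosh (t/2) := Real.cosh_pos (t/2)
    have hfsq : (f t)^2 = Real.cosh t - 1 := by
      rw [hf]; simp only
      rw [mul_pow, Real.sq_sqrt (by norm_num : (0:ℝ) ≤ 2), s16_cosh_half]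
    have hsqrt : Real.sqrt (2 + (f t)^2) = Real.sqrt 2 * Real.cosh (t/2) := by
      rw [hfsq, show (2:ℝ) + (Real.cosh t - 1) = 2 * Real.cosh (t/2)^2 by
          have := s16_cosh_half' t; linarith,
        Real.sqrt_mul (by norm_num : (0:ℝ) ≤ 2), Real.sqrt_sq hcosh.le]
    have habs : |f' t| = Real.sqrt 2 * (Real.cosh (t/2) * (2:ℝ)⁻¹) := by
      rw [hf']; exact abs_of_pos (by positivity)
    rw [smul_eq_mul, habs, hg]
    simp only
    rw [hsqrt, hfsq]
    simp only [hf]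
    have h1 : Real.sqrt 2 * Real.sinh (t/2) / (Real.sqrt 2 * Real.cosh (t/2))
        = Real.sinh (t/2) / Real.cosh (t/2) := mul_div_mul_left _ _ s2pos.ne'
    have h2 : (1:ℝ) - Real.sinh (t/2) / Real.cosh (t/2)
        = Real.exp (-(t/2)) / Real.cosh (t/2) := by
      rw [← Real.cosh_sub_sinh, sub_div, div_self hcosh.ne']
    rw [h1, h2, show -(ε * (Real.cosh t - 1)) - t/2
        = -(ε * (Real.cosh t - 1)) + -(t/2) by ring, Real.exp_add]
    have hs2 : Real.sqrt 2 * Real.sqrt 2 = 2 := Real.mul_self_sqrt (by norm_num)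
    set E := Real.exp (-(ε * (Real.cosh t - 1))) with hE
    set Q := Real.exp (-(t/2)) with hQ
    set c := Real.cosh (t/2) with hc
    rw [show Real.sqrt 2 * (c * 2⁻¹) * (Real.sqrt 2 * E * (Q / c))
        = (Real.sqrt 2 * Real.sqrt 2) * (c / c) * E * Q * 2⁻¹ from by ring,
      hs2, div_self hcosh.ne']
    ring
  simp_rw [heq] at key
  rw [← key]
  -- now compute ∫ g
  have hint1 : Integrable (fun w : ℝ => Real.sqrt 2 * Real.exp (-(ε * w^2))) := by
    simp_rw [neg_mul_eq_neg_mul]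
    exact (integrable_exp_neg_mul_sq hε).const_mul _
  have hint2 : Integrable (fun w : ℝ =>
      Real.sqrt 2 * Real.exp (-(ε * w^2)) * (w / Real.sqrt (2 + w^2))) := by
    refine hint1.mono ?_ (Filter.Eventually.of_forall fun w => ?_)
    · apply Continuous.aestronglyMeasurable
      fun_prop (disch := intro x; positivity)
    · have h2 : (0:ℝ) < Real.sqrt (2 + w^2) := Real.sqrt_pos.mpr (by positivity)
      have h3 : |w| ≤ Real.sqrt (2 + w^2) := by
        rw [← Real.sqrt_sq_eq_abs]
        exact Real.sqrt_le_sqrt (by nlinarith)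
      rw [Real.norm_eq_abs, Real.norm_eq_abs, abs_mul, abs_div, abs_of_pos h2,
        abs_of_pos (show (0:ℝ) < Real.sqrt 2 * Real.exp (-(ε * w^2)) by positivity)]
      have hb : |w| / Real.sqrt (2 + w^2) ≤ 1 := div_le_one_of_le₀ h3 h2.le
      have hpos : (0:ℝ) ≤ Real.sqrt 2 * Real.exp (-(ε * w^2)) := by positivity
      nlinarith
  have hgsplit : ∀ w : ℝ, g w = Real.sqrt 2 * Real.exp (-(ε * w^2))
      - Real.sqrt 2 * Real.exp (-(ε * w^2)) * (w / Real.sqrt (2 + w^2)) := by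
    intro w; rw [hg]; ring
  simp_rw [hgsplit]
  rw [integral_sub hint1 hint2, s16_odd_zero hε, sub_zero]
  simp_rw [neg_mul_eq_neg_mul]
  rw [integral_const_mul, integral_gaussian, ← Real.sqrt_mul (by norm_num : (0:ℝ) ≤ 2),
    mul_div_assoc]

/-- for every `ε > 0`,
`∫_{ℝ²} exp[−ε(cosh t − 1 + ½ s² e^t)] ds dt = 2π/ε`; equivalently,
`(t,s) ↦ (ε/(2π)) exp[−ε(cosh t − 1 + ½ s² e^t)]` is a probability density on `ℝ²`. -/
theorem stmt_16 (ε : ℝ) (hε : 0 < ε) :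
    ∫ p : ℝ × ℝ,
        Real.exp (-(ε * (Real.cosh p.1 - 1 + (1 / 2) * p.2 ^ 2 * Real.exp p.1)))
      = 2 * Real.pi / ε := by
  set F : ℝ × ℝ → ℝ := fun p =>
    Real.exp (-(ε * (Real.cosh p.1 - 1 + (1 / 2) * p.2 ^ 2 * Real.exp p.1))) with hF
  have hmeas : AEStronglyMeasurable F (volume.prod volume) := by
    apply Continuous.aestronglyMeasurable
    fun_prop
  have hsec : ∀ t : ℝ, Integrable (fun s : ℝ => F (t, s)) := by
    intro t
    have hb : (0:ℝ) < ε * Real.exp t / 2 := by positivity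
    refine ((integrable_exp_neg_mul_sq hb).const_mul
      (Real.exp (-(ε * (Real.cosh t - 1))))).congr ?_
    refine Filter.Eventually.of_forall fun s => ?_
    simp only [hF]
    rw [← Real.exp_add]; ring_nf
  have hnormeq : ∀ t : ℝ, (∫ s : ℝ, ‖F (t, s)‖)
      = Real.sqrt (2*Real.pi/ε) * Real.exp (-(ε * (Real.cosh t - 1)) - t/2) := by
    intro t
    have : ∀ s : ℝ, ‖F (t, s)‖ = F (t, s) := fun s =>
      Real.norm_of_nonneg (Real.exp_nonneg _)
    simp_rw [this]
    exact s16_inner hε t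
  have hnorm : Integrable (fun t : ℝ => ∫ s : ℝ, ‖F (t, s)‖) := by
    simp_rw [hnormeq]
    exact (s16_h_integrable hε).const_mul _
  have hint : Integrable F (volume.prod volume) :=
    (integrable_prod_iff hmeas).mpr ⟨Filter.Eventually.of_forall hsec, hnorm⟩
  rw [show (volume : Measure (ℝ × ℝ)) = volume.prod volume from Measure.volume_eq_prod ℝ ℝ]
  rw [integral_prod F hint]
  have : ∀ t : ℝ, (∫ s : ℝ, F (t, s))
      = Real.sqrt (2*Real.pi/ε) * Real.exp (-(ε * (Real.cosh t - 1)) - t/2) :=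
    fun t => s16_inner hε t
  simp_rw [this]
  rw [integral_const_mul, s16_oneD hε, Real.mul_self_sqrt (by positivity)]
end
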